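/- arXiv:1701.02045 — 4 statements merged into one kernel-verified Lean document; each statement's English description precedes it below -/
import Mathlib

section
/- For every θ ∈ ℝ^{n+m} and every v ∈ ℝⁿ with strictly positive entries, set V_L := diag(V_L*) v and V_i := (V_L)_i for load buses, V_i := (V_G)_{i−n} for generator buses. Then for every load bus i ≤ n: −Σ_{j=1}^{n+m} V_i V_j B_{ij} cos(θ_i − θ_j) = −4 (diag(v) S (v − 1_n))_i + (|A|_L D diag(h(v)) (1_{|E|} − cos(Aᵀθ)))_i, where cos is applied entrywise to the branch angle-difference vector Aᵀθ ∈ ℝ^{|E|}. Consequently, (θ, V_L) solves the reactive power flow equations Q_i = −Σ_j V_iV_jB_{ij} cos(θ_i − θ_j) at all load buses if and only if Q_L = −4 diag(v) S (v − 1_n) + |A|_L D diag(h(v)) (1_{|E|} − cos(Aᵀθ)). -/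
open Matrix BigOperators

noncomputable section

/-- Buses `a` and `b` are joined by a branch. -/
def busJoined {n m E : ℕ} (src tgt : Fin E → Fin n ⊕ Fin m)
    (a b : Fin n ⊕ Fin m) : Prop :=
  ∃ e : Fin E, (src e = a ∧ tgt e = b) ∨ (src e = b ∧ tgt e = a)

/-- The load–load block of the susceptance matrix. -/
def BLL {n m : ℕ} (B : Matrix (Fin n ⊕ Fin m) (Fin n ⊕ Fin m) ℝ) :
    Matrix (Fin n) (Fin n) ℝ :=
  Matrix.of fun i j => B (Sum.inl i) (Sum.inl j)

/-- The load–generator block of the susceptance matrix. -/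
def BLG {n m : ℕ} (B : Matrix (Fin n ⊕ Fin m) (Fin n ⊕ Fin m) ℝ) :
    Matrix (Fin n) (Fin m) ℝ :=
  Matrix.of fun i j => B (Sum.inl i) (Sum.inr j)

/-- Open-circuit load voltages  V_L* = −B_LL⁻¹ B_LG V_G. -/
def VLstar {n m : ℕ} (B : Matrix (Fin n ⊕ Fin m) (Fin n ⊕ Fin m) ℝ)
    (VG : Fin m → ℝ) : Fin n → ℝ :=
  -((BLL B)⁻¹.mulVec ((BLG B).mulVec VG))

/-- Open-circuit voltage profile on all buses: V_L* on loads, V_G on generators. -/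
def Vstar {n m : ℕ} (B : Matrix (Fin n ⊕ Fin m) (Fin n ⊕ Fin m) ℝ)
    (VG : Fin m → ℝ) : Fin n ⊕ Fin m → ℝ :=
  Sum.elim (VLstar B VG) VG

/-- Oriented node–edge incidence matrix: +1 at the source, −1 at the target. -/
def incA {n m E : ℕ} (src tgt : Fin E → Fin n ⊕ Fin m) :
    Matrix (Fin n ⊕ Fin m) (Fin E) ℝ :=
  Matrix.of fun a e => if src e = a then 1 else if tgt e = a then -1 else 0

/-- Load-bus rows of the unsigned incidence matrix |A|_L. -/
def absAL {n m E : ℕ} (src tgt : Fin E → Fin n ⊕ Fin m) :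
    Matrix (Fin n) (Fin E) ℝ :=
  Matrix.of fun i e => |incA src tgt (Sum.inl i) e|

/-- Branch stiffness matrix D = diag(V*_{s(e)} V*_{t(e)} B_{s(e)t(e)}). -/
def Dmat {n m E : ℕ} (B : Matrix (Fin n ⊕ Fin m) (Fin n ⊕ Fin m) ℝ)
    (VG : Fin m → ℝ) (src tgt : Fin E → Fin n ⊕ Fin m) :
    Matrix (Fin E) (Fin E) ℝ :=
  Matrix.diagonal fun e => Vstar B VG (src e) * Vstar B VG (tgt e) * B (src e) (tgt e)

/-- Nodal stiffness matrix S = ¼ diag(V_L*) B_LL diag(V_L*). -/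
def Smat {n m : ℕ} (B : Matrix (Fin n ⊕ Fin m) (Fin n ⊕ Fin m) ℝ)
    (VG : Fin m → ℝ) : Matrix (Fin n) (Fin n) ℝ :=
  (4⁻¹ : ℝ) • (Matrix.diagonal (VLstar B VG) * BLL B * Matrix.diagonal (VLstar B VG))

/-- The edge nonlinearity h(v): v_s v_t on load–load branches, v_t on
generator–load branches, and 1 on generator–generator branches. -/
def hvec {n m E : ℕ} (src tgt : Fin E → Fin n ⊕ Fin m) (v : Fin n → ℝ) :
    Fin E → ℝ := fun e =>
  match src e, tgt e with
  | Sum.inl i, Sum.inl j => v i * v j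
  | Sum.inr _, Sum.inl j => v j
  | Sum.inl i, Sum.inr _ => v i
  | Sum.inr _, Sum.inr _ => 1

/-- Branch active power flows p = (AᵀA)⁻¹AᵀP for a radial network. -/
def pflow {n m E : ℕ} (src tgt : Fin E → Fin n ⊕ Fin m)
    (P : Fin n ⊕ Fin m → ℝ) : Fin E → ℝ :=
  (((incA src tgt)ᵀ * incA src tgt)⁻¹ * (incA src tgt)ᵀ).mulVec P

/-- ψ(v) = diag(h(v))⁻¹ D⁻¹ p. -/
def psif {n m E : ℕ} (B : Matrix (Fin n ⊕ Fin m) (Fin n ⊕ Fin m) ℝ)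
    (VG : Fin m → ℝ) (src tgt : Fin E → Fin n ⊕ Fin m)
    (P : Fin n ⊕ Fin m → ℝ) (v : Fin n → ℝ) : Fin E → ℝ :=
  ((Matrix.diagonal (hvec src tgt v))⁻¹ * (Dmat B VG src tgt)⁻¹).mulVec (pflow src tgt P)

/-- u(v)_e = 1 − √(1 − ψ(v)_e²). -/
def uvec {n m E : ℕ} (B : Matrix (Fin n ⊕ Fin m) (Fin n ⊕ Fin m) ℝ)
    (VG : Fin m → ℝ) (src tgt : Fin E → Fin n ⊕ Fin m)
    (P : Fin n ⊕ Fin m → ℝ) (v : Fin n → ℝ) : Fin E → ℝ :=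
  fun e => 1 - Real.sqrt (1 - (psif B VG src tgt P v e) ^ 2)

/-- The fixed-point power flow map
f(v) = 1 − ¼S⁻¹ diag(Q_L) diag(v)⁻¹ 1 + ¼S⁻¹ diag(v)⁻¹ |A|_L D diag(h(v)) u(v). -/
def fppf {n m E : ℕ} (B : Matrix (Fin n ⊕ Fin m) (Fin n ⊕ Fin m) ℝ)
    (VG : Fin m → ℝ) (src tgt : Fin E → Fin n ⊕ Fin m)
    (P : Fin n ⊕ Fin m → ℝ) (QL : Fin n → ℝ) (v : Fin n → ℝ) : Fin n → ℝ :=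
  (fun _ => (1 : ℝ))
    - (4⁻¹ : ℝ) •
      (((Smat B VG)⁻¹ * Matrix.diagonal QL * (Matrix.diagonal v)⁻¹).mulVec fun _ => (1 : ℝ))
    + (4⁻¹ : ℝ) •
      (((Smat B VG)⁻¹ * (Matrix.diagonal v)⁻¹ * absAL src tgt * Dmat B VG src tgt *
          Matrix.diagonal (hvec src tgt v)).mulVec (uvec B VG src tgt P v))

end

/-- Reactive power reformulation (Lemma 2 / Step 2 of the paper): for any angles θ
and any positive scaled voltages v, with V_L = diag(V_L*) v, the reactive power
injection at each load bus equals
−4(diag(v) S (v−1))_i + (|A|_L D diag(h(v)) (1−cos(Aᵀθ)))_i; consequently (θ,V_L)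
solves the reactive power flow equations at all load buses iff
Q_L = −4 diag(v) S (v−1) + |A|_L D diag(h(v)) (1−cos(Aᵀθ)). -/
theorem stmt13 {n m E : ℕ} (hn : 0 < n) (hm : 0 < m)
    (B : Matrix (Fin n ⊕ Fin m) (Fin n ⊕ Fin m) ℝ)
    (VG : Fin m → ℝ)
    (src tgt : Fin E → Fin n ⊕ Fin m)
    (hsym : Bᵀ = B)
    (hne : ∀ e : Fin E, src e ≠ tgt e)
    (huniq : ∀ e f : Fin E,
      ((src e = src f ∧ tgt e = tgt f) ∨ (src e = tgt f ∧ tgt e = src f)) → e = f)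
    (horient : ∀ (e : Fin E) (i : Fin n) (j : Fin m),
      ¬(src e = Sum.inl i ∧ tgt e = Sum.inr j))
    (hBpos : ∀ a b : Fin n ⊕ Fin m, busJoined src tgt a b → 0 < B a b)
    (hBzero : ∀ a b : Fin n ⊕ Fin m, a ≠ b → ¬ busJoined src tgt a b → B a b = 0)
    (hBLL : (-(BLL B)).PosDef)
    (hVG : ∀ j, 0 < VG j) :
    ∀ (θ : Fin n ⊕ Fin m → ℝ) (v : Fin n → ℝ), (∀ i, 0 < v i) →
      ∀ V : Fin n ⊕ Fin m → ℝ,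
        V = Sum.elim (fun k => VLstar B VG k * v k) VG →
        ((∀ i : Fin n,
            -(∑ b : Fin n ⊕ Fin m,
                V (Sum.inl i) * V b * B (Sum.inl i) b * Real.cos (θ (Sum.inl i) - θ b))
              = -4 * ((Matrix.diagonal v * Smat B VG).mulVec (v - fun _ => 1)) i
                + ((absAL src tgt * Dmat B VG src tgt * Matrix.diagonal (hvec src tgt v)).mulVec
                    (fun e => 1 - Real.cos ((incA src tgt)ᵀ.mulVec θ e))) i)
          ∧
          ∀ QL : Fin n → ℝ,
            ((∀ i : Fin n,
                QL i = -(∑ b : Fin n ⊕ Fin m,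
                  V (Sum.inl i) * V b * B (Sum.inl i) b * Real.cos (θ (Sum.inl i) - θ b)))
              ↔ QL = fun i =>
                  -4 * ((Matrix.diagonal v * Smat B VG).mulVec (v - fun _ => 1)) i
                  + ((absAL src tgt * Dmat B VG src tgt * Matrix.diagonal (hvec src tgt v)).mulVec
                      (fun e => 1 - Real.cos ((incA src tgt)ᵀ.mulVec θ e))) i)) := by
  classical
  have hdet : IsUnit (BLL B).det := by
    have h1 : (0:ℝ) < (-(BLL B)).det := hBLL.det_pos
    have h2 : (-(BLL B)).det = (-1)^(Fintype.card (Fin n)) * (BLL B).det :=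
      Matrix.det_neg _
    have h3 : (BLL B).det ≠ 0 := by
      intro h
      rw [h2, h, mul_zero] at h1
      exact lt_irrefl _ h1
    exact isUnit_iff_ne_zero.mpr h3
  have hkey : (BLL B).mulVec (VLstar B VG) = -((BLG B).mulVec VG) := by
    unfold VLstar
    rw [Matrix.mulVec_neg, Matrix.mulVec_mulVec, Matrix.mul_nonsing_inv _ hdet,
      Matrix.one_mulVec]
  have hBsym : ∀ a b : Fin n ⊕ Fin m, B a b = B b a := by
    intro a b
    have h := congrFun (congrFun hsym a) b
    simpa [Matrix.transpose_apply] using h.symm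
  have hcos : ∀ x y : ℝ, Real.cos (x - y) = Real.cos (y - x) := by
    intro x y
    rw [← Real.cos_neg, neg_sub]
  intro θ v hv V hV
  subst hV
  set W : Fin n ⊕ Fin m → ℝ := Sum.elim (fun k => VLstar B VG k * v k) VG with hW
  -- angle along an edge
  have hAng : ∀ e : Fin E, (incA src tgt)ᵀ.mulVec θ e = θ (src e) - θ (tgt e) := by
    intro e
    have hterm : ∀ a : Fin n ⊕ Fin m, (incA src tgt)ᵀ e a * θ a =
        (if src e = a then θ a else 0) + (if tgt e = a then -θ a else 0) := by
      intro a
      simp only [Matrix.transpose_apply, incA, Matrix.of_apply]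
      by_cases h1 : src e = a
      · have h2 : ¬ (tgt e = a) := fun h => hne e (h1.trans h.symm)
        simp [h1, h2]
      · by_cases h2 : tgt e = a
        · simp [h1, h2]
        · simp [h1, h2]
    show ∑ a, (incA src tgt)ᵀ e a * θ a = θ (src e) - θ (tgt e)
    rw [Finset.sum_congr rfl (fun a _ => hterm a), Finset.sum_add_distrib]
    simp [sub_eq_add_neg]
  have main : ∀ i : Fin n,
      -(∑ b : Fin n ⊕ Fin m,
          W (Sum.inl i) * W b * B (Sum.inl i) b * Real.cos (θ (Sum.inl i) - θ b))
        = -4 * ((Matrix.diagonal v * Smat B VG).mulVec (v - fun _ => 1)) i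
          + ((absAL src tgt * Dmat B VG src tgt * Matrix.diagonal (hvec src tgt v)).mulVec
              (fun e => 1 - Real.cos ((incA src tgt)ᵀ.mulVec θ e))) i := by
    intro i
    set L : Fin n ⊕ Fin m := Sum.inl i with hLdef
    set f : (Fin n ⊕ Fin m) → ℝ :=
      fun b => W L * W b * B L b * (1 - Real.cos (θ L - θ b)) with hfdef
    set χ : Fin E → ℝ :=
      fun e => if src e = L then f (tgt e) else if tgt e = L then f (src e) else 0
      with hχdef
    -- the edge term, entrywise
    have hEdgeEntry : ∀ e : Fin E,
        (absAL src tgt * Dmat B VG src tgt * Matrix.diagonal (hvec src tgt v)) i e *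
          (1 - Real.cos ((incA src tgt)ᵀ.mulVec θ e)) = χ e := by
      intro e
      rw [Matrix.mul_diagonal, hAng]
      have hD : (absAL src tgt * Dmat B VG src tgt) i e =
          absAL src tgt i e *
            (Vstar B VG (src e) * Vstar B VG (tgt e) * B (src e) (tgt e)) := by
        unfold Dmat
        rw [Matrix.mul_diagonal]
      rw [hD]
      by_cases h1 : src e = L
      · have h2 : ¬ (tgt e = L) := fun h => hne e (h1.trans h.symm)
        have habs : absAL src tgt i e = 1 := by
          simp [absAL, incA, hLdef ▸ h1]
        rcases htgt : tgt e with j | g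
        · have hh : hvec src tgt v e = v i * v j := by
            simp [hvec, h1, htgt, hLdef]
          rw [habs, hh, h1]
          simp only [hχdef, h1, if_true, htgt, hfdef, hW]
          simp only [hLdef, Vstar, Sum.elim_inl]
          ring
        · exact absurd ⟨hLdef ▸ h1, htgt⟩ (horient e i g)
      · by_cases h2 : tgt e = L
        · have habs : absAL src tgt i e = 1 := by
            have h1' : ¬ (src e = Sum.inl i) := hLdef ▸ h1
            simp [absAL, incA, h1', hLdef ▸ h2]
          rcases hsrc : src e with j | g
          · have hh : hvec src tgt v e = v j * v i := by
              simp [hvec, hsrc, h2, hLdef]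
            rw [habs, hh, h2]
            have hne' : ¬ ((Sum.inl j : Fin n ⊕ Fin m) = Sum.inl i) := by
              intro h
              exact h1 (hsrc.trans (hLdef ▸ h))
            simp only [hχdef, hsrc, h2, hLdef, hne', if_false, if_true,
              eq_self_iff_true, hfdef, hW]
            simp only [hLdef, Vstar, Sum.elim_inl]
            rw [hBsym (Sum.inl j) (Sum.inl i), hcos (θ (Sum.inl j)) (θ (Sum.inl i))]
            ring
          · have hh : hvec src tgt v e = v i := by
              simp [hvec, hsrc, h2, hLdef]
            rw [habs, hh, h2]
            have hne' : ¬ ((Sum.inr g : Fin n ⊕ Fin m) = L) := by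
              simp [hLdef]
            simp only [hχdef, hsrc, h2, hLdef, hne', if_false, if_true,
              eq_self_iff_true, hfdef, hW]
            simp only [hLdef, Vstar, Sum.elim_inl, Sum.elim_inr, reduceCtorEq, if_false]
            rw [hBsym (Sum.inr g) (Sum.inl i), hcos (θ (Sum.inr g)) (θ (Sum.inl i))]
            ring
        · have habs : absAL src tgt i e = 0 := by
            simp [absAL, incA, hLdef ▸ h1, hLdef ▸ h2]
          rw [habs]
          simp [hχdef, h1, h2]
    -- sum over edges equals sum over buses
    have hfL : f L = 0 := by
      simp [hfdef]
    have hEdgeSum : (∑ e : Fin E, χ e) = ∑ b : Fin n ⊕ Fin m, f b := by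
      set s : Finset (Fin E) :=
        Finset.univ.filter (fun e => src e = L ∨ tgt e = L) with hs
      set t : Finset (Fin n ⊕ Fin m) :=
        Finset.univ.filter (fun b => b ≠ L ∧ busJoined src tgt L b) with ht
      have h1 : (∑ e : Fin E, χ e) = ∑ e ∈ s, χ e := by
        refine (Finset.sum_subset (Finset.subset_univ s) ?_).symm
        intro e _ hes
        have : ¬ (src e = L ∨ tgt e = L) := by
          intro h
          exact hes (Finset.mem_filter.mpr ⟨Finset.mem_univ e, h⟩)
        push_neg at this
        simp [hχdef, this.1, this.2]
      have h2 : (∑ b, f b) = ∑ b ∈ t, f b := by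
        refine (Finset.sum_subset (Finset.subset_univ t) ?_).symm
        intro b _ hbt
        have : ¬ (b ≠ L ∧ busJoined src tgt L b) := by
          intro h
          exact hbt (Finset.mem_filter.mpr ⟨Finset.mem_univ b, h⟩)
        by_cases hbL : b = L
        · rw [hbL]; exact hfL
        · have hnj : ¬ busJoined src tgt L b := fun hj => this ⟨hbL, hj⟩
          have hBz : B L b = 0 := hBzero L b (fun h => hbL h.symm) hnj
          simp [hfdef, hBz]
      rw [h1, h2]
      refine Finset.sum_bij
        (fun e _ => if src e = L then tgt e else src e) ?_ ?_ ?_ ?_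
      · intro e he
        have hmem := (Finset.mem_filter.mp he).2
        by_cases hsl : src e = L
        · rw [if_pos hsl]
          refine Finset.mem_filter.mpr ⟨Finset.mem_univ _, ?_, ⟨e, Or.inl ⟨hsl, rfl⟩⟩⟩
          exact fun h => hne e (hsl.trans h.symm)
        · have htl : tgt e = L := hmem.resolve_left hsl
          rw [if_neg hsl]
          refine Finset.mem_filter.mpr ⟨Finset.mem_univ _, ?_, ⟨e, Or.inr ⟨rfl, htl⟩⟩⟩
          exact fun h => hne e (h.trans htl.symm)
      · intro e1 he1 e2 he2 heq
        have hm1 := (Finset.mem_filter.mp he1).2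
        have hm2 := (Finset.mem_filter.mp he2).2
        by_cases hs1 : src e1 = L <;> by_cases hs2 : src e2 = L
        · rw [if_pos hs1, if_pos hs2] at heq
          exact huniq e1 e2 (Or.inl ⟨hs1.trans hs2.symm, heq⟩)
        · have ht2 : tgt e2 = L := hm2.resolve_left hs2
          rw [if_pos hs1, if_neg hs2] at heq
          exact huniq e1 e2 (Or.inr ⟨hs1.trans ht2.symm, heq⟩)
        · have ht1 : tgt e1 = L := hm1.resolve_left hs1
          rw [if_neg hs1, if_pos hs2] at heq
          exact huniq e1 e2 (Or.inr ⟨heq, ht1.trans hs2.symm⟩)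
        · have ht1 : tgt e1 = L := hm1.resolve_left hs1
          have ht2 : tgt e2 = L := hm2.resolve_left hs2
          rw [if_neg hs1, if_neg hs2] at heq
          exact huniq e1 e2 (Or.inl ⟨heq, ht1.trans ht2.symm⟩)
      · intro b hb
        obtain ⟨-, hbL, e, hor⟩ := Finset.mem_filter.mp hb
        rcases hor with ⟨hs, htg⟩ | ⟨hs, htg⟩
        · refine ⟨e, Finset.mem_filter.mpr ⟨Finset.mem_univ _, Or.inl hs⟩, ?_⟩
          rw [if_pos hs]; exact htg
        · refine ⟨e, Finset.mem_filter.mpr ⟨Finset.mem_univ _, Or.inr htg⟩, ?_⟩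
          have hss : ¬ (src e = L) := fun h => hbL (hs.symm.trans h)
          rw [if_neg hss]; exact hs
      · intro e he
        have hmem := (Finset.mem_filter.mp he).2
        by_cases hsl : src e = L
        · rw [if_pos hsl]
          simp [hχdef, hsl]
        · have htl : tgt e = L := hmem.resolve_left hsl
          rw [if_neg hsl]
          simp [hχdef, hsl, htl]
    -- the key cancellation
    have hkey' : (∑ j : Fin n, B (Sum.inl i) (Sum.inl j) * VLstar B VG j)
        = -(∑ g : Fin m, B (Sum.inl i) (Sum.inr g) * VG g) := by
      have := congrFun hkey i
      simpa [Matrix.mulVec, dotProduct, BLL, BLG] using this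
    -- expand the S-term
    have hSterm : ((Matrix.diagonal v * Smat B VG).mulVec (v - fun _ => 1)) i
        = ∑ j : Fin n,
            v i * (4⁻¹ * (VLstar B VG i * B (Sum.inl i) (Sum.inl j) * VLstar B VG j))
              * (v j - 1) := by
      simp only [Matrix.mulVec, dotProduct]
      refine Finset.sum_congr rfl (fun j _ => ?_)
      rw [Matrix.diagonal_mul]
      have hSentry : Smat B VG i j
          = 4⁻¹ * (VLstar B VG i * B (Sum.inl i) (Sum.inl j) * VLstar B VG j) := by
        unfold Smat
        rw [Matrix.smul_apply, Matrix.mul_diagonal, Matrix.diagonal_mul]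
        simp [BLL, mul_assoc]
      rw [hSentry]
      simp [Pi.sub_apply]
    -- expand the edge term in the goal
    have hEdgeTerm :
        ((absAL src tgt * Dmat B VG src tgt * Matrix.diagonal (hvec src tgt v)).mulVec
            (fun e => 1 - Real.cos ((incA src tgt)ᵀ.mulVec θ e))) i
          = ∑ b : Fin n ⊕ Fin m, f b := by
      rw [← hEdgeSum]
      show (∑ e, (absAL src tgt * Dmat B VG src tgt * Matrix.diagonal (hvec src tgt v)) i e
          * (1 - Real.cos ((incA src tgt)ᵀ.mulVec θ e))) = ∑ e, χ e
      exact Finset.sum_congr rfl (fun e _ => hEdgeEntry e)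
    rw [hEdgeTerm, hSterm]
    -- split f into constant and cosine parts
    have hfsplit : (∑ b : Fin n ⊕ Fin m, f b)
        = (∑ b : Fin n ⊕ Fin m, W L * W b * B L b)
          - ∑ b : Fin n ⊕ Fin m, W L * W b * B L b * Real.cos (θ L - θ b) := by
      rw [← Finset.sum_sub_distrib]
      refine Finset.sum_congr rfl (fun b _ => ?_)
      simp [hfdef]
      ring
    rw [hfsplit]
    have hzero : -4 * (∑ j : Fin n,
          v i * (4⁻¹ * (VLstar B VG i * B (Sum.inl i) (Sum.inl j) * VLstar B VG j))
            * (v j - 1))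
        + (∑ b : Fin n ⊕ Fin m, W L * W b * B L b) = 0 := by
      rw [Fintype.sum_sum_type]
      have hW1 : ∀ j : Fin n, W L * W (Sum.inl j) * B L (Sum.inl j)
          = (VLstar B VG i * v i) * (VLstar B VG j * v j) * B (Sum.inl i) (Sum.inl j) := by
        intro j
        simp [hW, hLdef]
      have hW2 : ∀ g : Fin m, W L * W (Sum.inr g) * B L (Sum.inr g)
          = (VLstar B VG i * v i) * VG g * B (Sum.inl i) (Sum.inr g) := by
        intro g
        simp [hW, hLdef]
      rw [Finset.sum_congr rfl (fun j _ => hW1 j), Finset.sum_congr rfl (fun g _ => hW2 g)]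
      have e1' : (∑ j : Fin n, (VLstar B VG i * v i) * (VLstar B VG j * v j)
              * B (Sum.inl i) (Sum.inl j))
          - 4 * (∑ j : Fin n,
              v i * (4⁻¹ * (VLstar B VG i * B (Sum.inl i) (Sum.inl j) * VLstar B VG j))
                * (v j - 1))
          = (v i * VLstar B VG i)
              * ∑ j : Fin n, B (Sum.inl i) (Sum.inl j) * VLstar B VG j := by
        rw [Finset.mul_sum, Finset.mul_sum, ← Finset.sum_sub_distrib]
        exact Finset.sum_congr rfl fun j _ => by ring
      have e2' : (∑ g : Fin m, (VLstar B VG i * v i) * VG g * B (Sum.inl i) (Sum.inr g))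
          = (v i * VLstar B VG i)
              * ∑ g : Fin m, B (Sum.inl i) (Sum.inr g) * VG g := by
        rw [Finset.mul_sum]
        exact Finset.sum_congr rfl fun g _ => by ring
      linear_combination e1' + e2' + (v i * VLstar B VG i) * hkey'
    linarith [hzero]
  refine ⟨main, fun QL => ⟨fun h => funext fun i => (h i).trans (main i), ?_⟩⟩
  intro h i
  rw [congrFun h i]
  exact (main i).symm
end

section
/- Assume the network graph is connected and acyclic (ker A = {0} and ker Aᵀ = span{1_{n+m}}) and Σ_{i=1}^{n+m} P_i = 0, and set p := (AᵀA)⁻¹ Aᵀ P and ψ(v) := diag(h(v))⁻¹ D⁻¹ p for v ∈ ℝⁿ with positive entries. Then for every θ ∈ ℝ^{n+m} and every v ∈ ℝⁿ with strictly positive entries, with V_i := (V_L*)_i v_i for load buses and V_i := (V_G)_{i−n} for generator buses, the active power flow equations P_i = Σ_{j=1}^{n+m} V_i V_j B_{ij} sin(θ_i − θ_j) hold at every bus i if and only if sin((Aᵀθ)_e) = ψ(v)_e for every edge e ∈ E. -/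
open Matrix BigOperators

section helpers
open Matrix

lemma VL_nonneg {n m : ℕ} (B : Matrix (Fin n ⊕ Fin m) (Fin n ⊕ Fin m) ℝ)
    (VG : Fin m → ℝ)
    (hsym : Bᵀ = B)
    (hBnn : ∀ a b : Fin n ⊕ Fin m, a ≠ b → 0 ≤ B a b)
    (hBLL : (-(BLL B)).PosDef)
    (hVG : ∀ j, 0 < VG j) :
    ∀ i, 0 ≤ VLstar B VG i := by
  classical
  set M : Matrix (Fin n) (Fin n) ℝ := -(BLL B) with hM
  set w : Fin n → ℝ := (BLG B).mulVec VG with hwdef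
  set u : Fin n → ℝ := VLstar B VG with hu
  have hBsymm : ∀ a b, B a b = B b a := fun a b => by
    have h := congrFun (congrFun hsym b) a
    rwa [Matrix.transpose_apply] at h
  have hMT : Mᵀ = M := by
    ext i j
    simp only [hM, Matrix.transpose_apply, Matrix.neg_apply, BLL, Matrix.of_apply]
    rw [hBsymm]
  have hdet : IsUnit (BLL B).det := by
    have h1 : (0:ℝ) < M.det := hBLL.det_pos
    rw [hM, Matrix.det_neg] at h1
    refine isUnit_iff_ne_zero.mpr fun h0 => ?_
    rw [h0, mul_zero] at h1; exact lt_irrefl 0 h1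
  have hMu : M.mulVec u = w := by
    rw [hu]
    show M.mulVec (VLstar B VG) = w
    rw [VLstar, hM]
    rw [Matrix.neg_mulVec, Matrix.mulVec_neg, neg_neg, Matrix.mulVec_mulVec,
      Matrix.mul_nonsing_inv _ hdet, Matrix.one_mulVec]
  have hw : ∀ i, 0 ≤ w i := by
    intro i
    show 0 ≤ ∑ k, BLG B i k * VG k
    refine Finset.sum_nonneg fun k _ => ?_
    exact mul_nonneg (hBnn _ _ (by simp)) (hVG k).le
  set x : Fin n → ℝ := fun i => |u i| with hx
  have q1 : x ⬝ᵥ M.mulVec x ≤ u ⬝ᵥ M.mulVec u := by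
    simp only [Matrix.mulVec, dotProduct, Finset.mul_sum]
    refine Finset.sum_le_sum fun i _ => Finset.sum_le_sum fun j _ => ?_
    rcases eq_or_ne i j with rfl | hij
    · have h := abs_mul_abs_self (u i)
      have : x i * (M i i * x i) = u i * (M i i * u i) := by
        simp only [hx]; linear_combination M i i * h
      exact this.le
    · have h1 : u i * u j ≤ |u i| * |u j| := by
        rw [← abs_mul]; exact le_abs_self _
      have h2 : M i j ≤ 0 := by
        simp only [hM, Matrix.neg_apply, BLL, Matrix.of_apply]
        have := hBnn (Sum.inl i) (Sum.inl j) (by simpa using hij)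
        linarith
      simp only [hx]; nlinarith
  have q2 : u ⬝ᵥ w ≤ x ⬝ᵥ w := by
    refine Finset.sum_le_sum fun i _ => ?_
    exact mul_le_mul_of_nonneg_right (le_abs_self _) (hw i)
  have hxMu : x ⬝ᵥ M.mulVec u = x ⬝ᵥ w := by rw [hMu]
  have huMx : u ⬝ᵥ M.mulVec x = x ⬝ᵥ w := by
    rw [Matrix.dotProduct_mulVec, ← hMT, Matrix.vecMul_transpose, hMu,
      dotProduct_comm]
  have huMu : u ⬝ᵥ M.mulVec u = u ⬝ᵥ w := by rw [hMu]
  have q3 : (x - u) ⬝ᵥ M.mulVec (x - u) ≤ 0 := by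
    rw [Matrix.mulVec_sub, sub_dotProduct, dotProduct_sub,
      dotProduct_sub, hxMu, huMx, huMu]
    rw [huMu] at q1
    linarith
  have q4 : x = u := by
    by_contra hne'
    have hxu : x - u ≠ 0 := sub_ne_zero.mpr hne'
    have := hBLL.dotProduct_mulVec_pos hxu
    rw [star_trivial] at this
    exact absurd q3 (not_le.mpr this)
  intro i
  have := congrFun q4 i
  simp only [hx] at this
  rw [← this]
  exact abs_nonneg _


lemma incA_col {n m E : ℕ} (src tgt : Fin E → Fin n ⊕ Fin m)
    (hne : ∀ e, src e ≠ tgt e) (θ : Fin n ⊕ Fin m → ℝ) (e : Fin E) :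
    (incA src tgt)ᵀ.mulVec θ e = θ (src e) - θ (tgt e) := by
  have key : ∀ a, (incA src tgt)ᵀ e a * θ a
      = (if src e = a then θ a else 0) + (if tgt e = a then -θ a else 0) := by
    intro a
    simp only [incA, Matrix.transpose_apply, Matrix.of_apply]
    split_ifs with h1 h2
    · exact absurd (h1.trans h2.symm) (hne e)
    · ring
    · ring
    · ring
  simp only [Matrix.mulVec, dotProduct, key, Finset.sum_add_distrib,
    Finset.sum_ite_eq, Finset.mem_univ, if_true]
  ring

lemma VL_pos {n m E : ℕ} (hm : 0 < m)
    (B : Matrix (Fin n ⊕ Fin m) (Fin n ⊕ Fin m) ℝ)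
    (VG : Fin m → ℝ)
    (src tgt : Fin E → Fin n ⊕ Fin m)
    (hsym : Bᵀ = B)
    (hne : ∀ e : Fin E, src e ≠ tgt e)
    (horient : ∀ (e : Fin E) (i : Fin n) (j : Fin m),
      ¬(src e = Sum.inl i ∧ tgt e = Sum.inr j))
    (hBpos : ∀ a b : Fin n ⊕ Fin m, busJoined src tgt a b → 0 < B a b)
    (hBnn : ∀ a b : Fin n ⊕ Fin m, a ≠ b → 0 ≤ B a b)
    (hBLL : (-(BLL B)).PosDef)
    (hVG : ∀ j, 0 < VG j)
    (hconn : ∀ x : Fin n ⊕ Fin m → ℝ,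
      (incA src tgt)ᵀ.mulVec x = 0 ↔ ∃ c : ℝ, x = fun _ => c) :
    ∀ i, 0 < VLstar B VG i := by
  classical
  set u : Fin n → ℝ := VLstar B VG with hu
  have hunn : ∀ i, 0 ≤ u i := VL_nonneg B VG hsym hBnn hBLL hVG
  have hdet : IsUnit (BLL B).det := by
    have h1 : (0:ℝ) < (-(BLL B)).det := hBLL.det_pos
    rw [Matrix.det_neg] at h1
    refine isUnit_iff_ne_zero.mpr fun h0 => ?_
    rw [h0, mul_zero] at h1; exact lt_irrefl 0 h1
  have hMu : (BLL B).mulVec u = -((BLG B).mulVec VG) := by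
    rw [hu, VLstar, Matrix.mulVec_neg, Matrix.mulVec_mulVec,
      Matrix.mul_nonsing_inv _ hdet, Matrix.one_mulVec]
  have hrow : ∀ i, u i = 0 →
      (∀ k, B (Sum.inl i) (Sum.inr k) = 0) ∧
      (∀ j, 0 < B (Sum.inl i) (Sum.inl j) → u j = 0) := by
    intro i hi
    have h := congrFun hMu i
    simp only [Matrix.mulVec, dotProduct, Pi.neg_apply, BLL, BLG,
      Matrix.of_apply] at h
    have hterm1 : ∀ j : Fin n, 0 ≤ B (Sum.inl i) (Sum.inl j) * u j := by
      intro j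
      rcases eq_or_ne j i with rfl | hj
      · rw [hi, mul_zero]
      · exact mul_nonneg (hBnn _ _ (by simp [hj.symm])) (hunn j)
    have hterm2 : ∀ k : Fin m, 0 ≤ B (Sum.inl i) (Sum.inr k) * VG k :=
      fun k => mul_nonneg (hBnn _ _ (by simp)) (hVG k).le
    have hs1 : 0 ≤ ∑ j, B (Sum.inl i) (Sum.inl j) * u j :=
      Finset.sum_nonneg fun j _ => hterm1 j
    have hs2 : 0 ≤ ∑ k, B (Sum.inl i) (Sum.inr k) * VG k :=
      Finset.sum_nonneg fun k _ => hterm2 k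
    have hz1 : ∑ j, B (Sum.inl i) (Sum.inl j) * u j = 0 := by linarith
    have hz2 : ∑ k, B (Sum.inl i) (Sum.inr k) * VG k = 0 := by linarith
    have he1 := (Finset.sum_eq_zero_iff_of_nonneg
      (fun j _ => hterm1 j)).mp hz1
    have he2 := (Finset.sum_eq_zero_iff_of_nonneg
      (fun k _ => hterm2 k)).mp hz2
    constructor
    · intro k
      have := he2 k (Finset.mem_univ k)
      exact (mul_eq_zero.mp this).resolve_right (hVG k).ne'
    · intro j hBj
      have := he1 j (Finset.mem_univ j)
      exact (mul_eq_zero.mp this).resolve_left hBj.ne'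
  -- connectivity argument
  have hvanish : ∀ i, u i ≠ 0 := by
    intro i0 hi0
    set x : Fin n ⊕ Fin m → ℝ :=
      Sum.elim (fun i => if u i = 0 then 0 else 1) (fun _ => 1) with hx
    have hAx : (incA src tgt)ᵀ.mulVec x = 0 := by
      funext e
      rw [Pi.zero_apply, incA_col src tgt hne x e, sub_eq_zero]
      have hjoin : busJoined src tgt (src e) (tgt e) :=
        ⟨e, Or.inl ⟨rfl, rfl⟩⟩
      have hjoin' : busJoined src tgt (tgt e) (src e) :=
        ⟨e, Or.inr ⟨rfl, rfl⟩⟩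
      rcases hse : src e with i | k <;> rcases hte : tgt e with j | l
      · -- load-load
        rw [hse, hte] at hjoin hjoin'
        simp only [hx, Sum.elim_inl]
        by_cases hui : u i = 0
        · have huj : u j = 0 :=
            (hrow i hui).2 j (hBpos _ _ hjoin)
          simp [hui, huj]
        · by_cases huj : u j = 0
          · have : u i = 0 := (hrow j huj).2 i (hBpos _ _ hjoin')
            exact absurd this hui
          · simp [hui, huj]
      · exact absurd ⟨hse, hte⟩ (horient e i l)
      · -- generator source, load target
        rw [hse, hte] at hjoin hjoin'
        simp only [hx, Sum.elim_inr, Sum.elim_inl]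
        by_cases huj : u j = 0
        · have : B (Sum.inl j) (Sum.inr k) = 0 := (hrow j huj).1 k
          have := hBpos _ _ hjoin'
          simp_all
        · simp [huj]
      · simp [hx]
    obtain ⟨c, hc⟩ := (hconn x).mp hAx
    have h1 : x (Sum.inr ⟨0, hm⟩) = c := by rw [hc]
    have h0 : x (Sum.inl i0) = c := by rw [hc]
    simp only [hx, Sum.elim_inr, Sum.elim_inl, hi0, if_pos rfl] at h1 h0
    rw [← h0] at h1
    exact one_ne_zero h1
  exact fun i => lt_of_le_of_ne (hunn i) (Ne.symm (hvanish i))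


lemma inv_diag {k : ℕ} (d : Fin k → ℝ) (hd : ∀ e, d e ≠ 0) :
    (Matrix.diagonal d)⁻¹ = Matrix.diagonal (fun e => (d e)⁻¹) := by
  apply Matrix.inv_eq_right_inv
  rw [Matrix.diagonal_mul_diagonal]
  have h : (fun i => d i * (d i)⁻¹) = fun _ => (1:ℝ) :=
    funext fun e => mul_inv_cancel₀ (hd e)
  rw [h, Matrix.diagonal_one]

lemma mulVec_incA {n m E : ℕ} (src tgt : Fin E → Fin n ⊕ Fin m)
    (q : Fin E → ℝ) (a : Fin n ⊕ Fin m) :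
    (incA src tgt).mulVec q a
      = ∑ e, (if src e = a then q e else if tgt e = a then -q e else 0) := by
  simp only [Matrix.mulVec, dotProduct, incA, Matrix.of_apply]
  refine Finset.sum_congr rfl fun e _ => ?_
  split_ifs <;> ring

lemma flow_eq {n m E : ℕ} (hn : 0 < n)
    (src tgt : Fin E → Fin n ⊕ Fin m)
    (hacyclic : ∀ p : Fin E → ℝ, (incA src tgt).mulVec p = 0 → p = 0)
    (hconn : ∀ x : Fin n ⊕ Fin m → ℝ,
      (incA src tgt)ᵀ.mulVec x = 0 ↔ ∃ c : ℝ, x = fun _ => c)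
    (hne : ∀ e, src e ≠ tgt e)
    (P : Fin n ⊕ Fin m → ℝ) (hP : ∑ a, P a = 0) :
    (incA src tgt).mulVec (pflow src tgt P) = P := by
  classical
  set A := incA src tgt with hA
  set G := Aᵀ * A with hG
  have hGdet : IsUnit G.det := by
    refine isUnit_iff_ne_zero.mpr fun h0 => ?_
    obtain ⟨y, hy0, hy⟩ := (Matrix.exists_mulVec_eq_zero_iff).mpr h0
    have hyy : A.mulVec y ⬝ᵥ A.mulVec y = 0 := by
      have h1 : A.mulVec y ⬝ᵥ A.mulVec y = y ⬝ᵥ G.mulVec y := by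
        rw [hG, ← Matrix.mulVec_mulVec, Matrix.dotProduct_mulVec y,
          Matrix.vecMul_transpose]
      rw [h1, hy, dotProduct_zero]
    have : A.mulVec y = 0 := by
      rw [← dotProduct_self_eq_zero (v := A.mulVec y)]
      exact hyy
    exact hy0 (hacyclic y this)
  have hGinv : G * G⁻¹ = 1 := Matrix.mul_nonsing_inv _ hGdet
  set q : Fin E → ℝ := pflow src tgt P with hq
  set r : Fin n ⊕ Fin m → ℝ := A.mulVec q - P with hr
  have hAr : Aᵀ.mulVec r = 0 := by
    rw [hr, Matrix.mulVec_sub]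
    have : Aᵀ.mulVec (A.mulVec q) = Aᵀ.mulVec P := by
      rw [hq, pflow, ← hA, ← hG, Matrix.mulVec_mulVec, Matrix.mulVec_mulVec,
        ← Matrix.mul_assoc, ← hG, hGinv, Matrix.one_mul]
    rw [this, sub_self]
  obtain ⟨c, hc⟩ := (hconn r).mp hAr
  have hcolsum : ∀ e, ∑ a, A a e = 0 := by
    intro e
    have h := incA_col src tgt hne (fun _ => 1) e
    simp only [Matrix.mulVec, dotProduct, Matrix.transpose_apply,
      mul_one, sub_self] at h
    exact h
  have hsumr : ∑ a, r a = 0 := by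
    rw [hr]
    simp only [Pi.sub_apply, Finset.sum_sub_distrib, hP, sub_zero]
    simp only [Matrix.mulVec, dotProduct]
    rw [Finset.sum_comm]
    rw [show (0:ℝ) = ∑ e : Fin E, 0 by simp]
    refine Finset.sum_congr rfl fun e _ => ?_
    rw [← Finset.sum_mul, hcolsum e, zero_mul]
  have hc0 : c = 0 := by
    rw [hc] at hsumr
    simp only [Finset.sum_const, Finset.card_univ, Fintype.card_sum,
      Fintype.card_fin, nsmul_eq_mul] at hsumr
    have hnm : (0:ℝ) < (n + m : ℕ) := by positivity
    rcases mul_eq_zero.mp hsumr with h | h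
    · exact absurd h hnm.ne'
    · exact h
  have : r = 0 := by rw [hc, hc0]; funext a; rfl
  have := sub_eq_zero.mp (hr ▸ this)
  exact this


lemma hvec_pos {n m E : ℕ} (src tgt : Fin E → Fin n ⊕ Fin m) (v : Fin n → ℝ)
    (hv : ∀ i, 0 < v i) (e : Fin E) : 0 < hvec src tgt v e := by
  rcases hse : src e with i | k <;> rcases hte : tgt e with j | l <;>
    simp only [hvec, hse, hte] <;>
    first
      | exact mul_pos (hv _) (hv _)
      | exact hv _
      | exact one_pos

end helpers

/-- Active power reformulation for radial networks (Corollary 1 of the paper):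
for a connected acyclic network with balanced injections P, and for any angles θ
and positive scaled voltages v (with V_L = diag(V_L*) v), the active power flow
equations hold at every bus iff sin((Aᵀθ)_e) = ψ(v)_e on every branch, where
ψ(v) = diag(h(v))⁻¹ D⁻¹ p and p = (AᵀA)⁻¹AᵀP. -/
theorem stmt14 {n m E : ℕ} (hn : 0 < n) (hm : 0 < m)
    (B : Matrix (Fin n ⊕ Fin m) (Fin n ⊕ Fin m) ℝ)
    (VG : Fin m → ℝ)
    (src tgt : Fin E → Fin n ⊕ Fin m)
    (hsym : Bᵀ = B)
    (hne : ∀ e : Fin E, src e ≠ tgt e)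
    (huniq : ∀ e f : Fin E,
      ((src e = src f ∧ tgt e = tgt f) ∨ (src e = tgt f ∧ tgt e = src f)) → e = f)
    (horient : ∀ (e : Fin E) (i : Fin n) (j : Fin m),
      ¬(src e = Sum.inl i ∧ tgt e = Sum.inr j))
    (hBpos : ∀ a b : Fin n ⊕ Fin m, busJoined src tgt a b → 0 < B a b)
    (hBzero : ∀ a b : Fin n ⊕ Fin m, a ≠ b → ¬ busJoined src tgt a b → B a b = 0)
    (hBLL : (-(BLL B)).PosDef)
    (hVG : ∀ j, 0 < VG j)
    (hacyclic : ∀ p : Fin E → ℝ, (incA src tgt).mulVec p = 0 → p = 0)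
    (hconn : ∀ x : Fin n ⊕ Fin m → ℝ,
      (incA src tgt)ᵀ.mulVec x = 0 ↔ ∃ c : ℝ, x = fun _ => c)
    (P : Fin n ⊕ Fin m → ℝ)
    (hP : ∑ a, P a = 0) :
    ∀ (θ : Fin n ⊕ Fin m → ℝ) (v : Fin n → ℝ), (∀ i, 0 < v i) →
      ∀ V : Fin n ⊕ Fin m → ℝ,
        V = Sum.elim (fun k => VLstar B VG k * v k) VG →
        ((∀ a : Fin n ⊕ Fin m,
            P a = ∑ b : Fin n ⊕ Fin m, V a * V b * B a b * Real.sin (θ a - θ b))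
          ↔ ∀ e : Fin E,
              Real.sin ((incA src tgt)ᵀ.mulVec θ e) = psif B VG src tgt P v e) := by
  classical
  intro θ v hv V hV
  have hBnn : ∀ a b : Fin n ⊕ Fin m, a ≠ b → 0 ≤ B a b := by
    intro a b hab
    by_cases hj : busJoined src tgt a b
    · exact (hBpos a b hj).le
    · exact le_of_eq (hBzero a b hab hj).symm
  have hBsymm : ∀ a b, B a b = B b a := fun a b => by
    have h := congrFun (congrFun hsym b) a
    rwa [Matrix.transpose_apply] at h
  have hVLpos : ∀ i, 0 < VLstar B VG i :=
    VL_pos hm B VG src tgt hsym hne horient hBpos hBnn hBLL hVG hconn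
  have hVs : ∀ a, 0 < Vstar B VG a := by
    rintro (i | k)
    · exact hVLpos i
    · exact hVG k
  set d : Fin E → ℝ :=
    fun e => Vstar B VG (src e) * Vstar B VG (tgt e) * B (src e) (tgt e) with hd
  have hdpos : ∀ e, 0 < d e := fun e =>
    mul_pos (mul_pos (hVs _) (hVs _)) (hBpos _ _ ⟨e, Or.inl ⟨rfl, rfl⟩⟩)
  have hhpos : ∀ e, 0 < hvec src tgt v e := hvec_pos src tgt v hv
  have hVV : ∀ e, d e * hvec src tgt v e
      = V (src e) * V (tgt e) * B (src e) (tgt e) := by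
    intro e
    rw [hV, hd]
    rcases hse : src e with i | k <;> rcases hte : tgt e with j | l <;>
      simp only [hvec, hse, hte, Sum.elim_inl, Sum.elim_inr, Vstar] <;> ring
  set p : Fin E → ℝ := pflow src tgt P with hp
  have hAp : (incA src tgt).mulVec p = P :=
    flow_eq hn src tgt hacyclic hconn hne P hP
  have hpsi : ∀ e, psif B VG src tgt P v e
      = (hvec src tgt v e)⁻¹ * ((d e)⁻¹ * p e) := by
    intro e
    rw [psif, Dmat,
      inv_diag _ (fun e => (hhpos e).ne'),
      inv_diag _ (fun e => (hdpos e).ne'),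
      Matrix.diagonal_mul_diagonal, Matrix.mulVec_diagonal]
    ring
  set w : Fin E → ℝ :=
    fun e => d e * hvec src tgt v e * Real.sin (θ (src e) - θ (tgt e)) with hw
  have key : ∀ a, ∑ b, V a * V b * B a b * Real.sin (θ a - θ b)
      = (incA src tgt).mulVec w a := by
    intro a
    rw [mulVec_incA]
    have hLHS : ∑ b, V a * V b * B a b * Real.sin (θ a - θ b)
        = ∑ b ∈ Finset.univ.filter (fun b => busJoined src tgt a b),
            V a * V b * B a b * Real.sin (θ a - θ b) := by
      symm
      apply Finset.sum_filter_of_ne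
      intro b _ hb
      by_contra hnj
      rcases eq_or_ne a b with rfl | hab
      · exact hb (by simp)
      · exact hb (by rw [hBzero a b hab hnj]; ring)
    have hRHS : ∑ e, (if src e = a then w e else if tgt e = a then -w e else 0)
        = ∑ e ∈ Finset.univ.filter (fun e => src e = a ∨ tgt e = a),
            (if src e = a then w e else if tgt e = a then -w e else 0) := by
      symm
      apply Finset.sum_filter_of_ne
      intro e _ hge
      by_contra hno
      push_neg at hno
      rw [if_neg hno.1, if_neg hno.2] at hge
      exact hge rfl
    rw [hLHS, hRHS]
    symm
    refine Finset.sum_bij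
      (fun e _ => if src e = a then tgt e else src e) ?_ ?_ ?_ ?_
    · intro e he
      simp only [Finset.mem_filter, Finset.mem_univ, true_and] at he ⊢
      by_cases hs : src e = a
      · rw [if_pos hs]
        exact ⟨e, Or.inl ⟨hs, rfl⟩⟩
      · rw [if_neg hs]
        exact ⟨e, Or.inr ⟨rfl, he.resolve_left hs⟩⟩
    · intro e1 he1 e2 he2 h12
      simp only [Finset.mem_filter, Finset.mem_univ, true_and] at he1 he2
      by_cases hs1 : src e1 = a <;> by_cases hs2 : src e2 = a
      · rw [if_pos hs1, if_pos hs2] at h12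
        exact huniq e1 e2 (Or.inl ⟨hs1.trans hs2.symm, h12⟩)
      · rw [if_pos hs1, if_neg hs2] at h12
        exact huniq e1 e2 (Or.inr ⟨hs1.trans (he2.resolve_left hs2).symm, h12⟩)
      · rw [if_neg hs1, if_pos hs2] at h12
        exact huniq e1 e2 (Or.inr ⟨h12, (he1.resolve_left hs1).trans hs2.symm⟩)
      · rw [if_neg hs1, if_neg hs2] at h12
        exact huniq e1 e2
          (Or.inl ⟨h12, (he1.resolve_left hs1).trans (he2.resolve_left hs2).symm⟩)
    · intro b hb
      simp only [Finset.mem_filter, Finset.mem_univ, true_and] at hb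
      obtain ⟨e, he⟩ := hb
      rcases he with ⟨hs, ht⟩ | ⟨hs, ht⟩
      · exact ⟨e, by
          simp only [Finset.mem_filter, Finset.mem_univ, true_and]
          exact Or.inl hs, by rw [if_pos hs]; exact ht⟩
      · have hsa : src e ≠ a := by
          intro h
          exact hne e (h.trans ht.symm)
        exact ⟨e, by
          simp only [Finset.mem_filter, Finset.mem_univ, true_and]
          exact Or.inr ht, by rw [if_neg hsa]; exact hs⟩
    · intro e he
      simp only [Finset.mem_filter, Finset.mem_univ, true_and] at he
      by_cases hs : src e = a
      · rw [if_pos hs, if_pos hs, hw]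
        simp only
        rw [hVV e, hs]
      · have ht : tgt e = a := he.resolve_left hs
        rw [if_neg hs, if_pos ht, if_neg hs, hw]
        simp only
        rw [hVV e, ht, hBsymm a (src e)]
        rw [show θ a - θ (src e) = -(θ (src e) - θ a) by ring, Real.sin_neg]
        ring
  constructor
  · intro hpf e
    have hAw : (incA src tgt).mulVec w = P :=
      funext fun a => (key a).symm.trans (hpf a).symm
    have hz : (incA src tgt).mulVec (w - p) = 0 := by
      rw [Matrix.mulVec_sub, hAw, hAp, sub_self]
    have hwp : w = p := sub_eq_zero.mp (hacyclic _ hz)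
    have he := congrFun hwp e
    simp only [hw] at he
    have hcalc : ∀ dd hh st : ℝ, dd ≠ 0 → hh ≠ 0 →
        hh⁻¹ * (dd⁻¹ * (dd * hh * st)) = st := by
      intro dd hh st hdd hhh
      field_simp
    rw [incA_col src tgt hne θ e, hpsi e, ← he]
    exact (hcalc _ _ _ (hdpos e).ne' (hhpos e).ne').symm
  · intro hsin a
    rw [key a]
    have hwp : w = p := by
      funext e
      have h1 := hsin e
      rw [incA_col src tgt hne θ e, hpsi e] at h1
      have hcalc : ∀ dd hh st : ℝ, dd ≠ 0 → hh ≠ 0 →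
          dd * hh * (hh⁻¹ * (dd⁻¹ * st)) = st := by
        intro dd hh st hdd hhh
        field_simp
      simp only [hw]
      rw [h1]
      exact hcalc _ _ _ (hdpos e).ne' (hhpos e).ne'
    rw [hwp]
    exact (congrFun hAp a).symm
end

section
/- Assume the network graph is connected and acyclic (ker A = {0} and ker Aᵀ = span{1_{n+m}}) and Σ_{i=1}^{n+m} P_i = 0. Fix v ∈ ℝⁿ with strictly positive entries and set V_L := diag(V_L*) v. Then the following are equivalent: (i) there exists θ ∈ ℝ^{n+m} with |(Aᵀθ)_e| ≤ π/2 for every edge e such that (θ, V_L) solves the power flow equations P_i = Σ_j V_iV_jB_{ij} sin(θ_i − θ_j) for all buses i and Q_i = −Σ_j V_iV_jB_{ij} cos(θ_i − θ_j) for all load buses i; (ii) |ψ(v)_e| ≤ 1 for every edge e and f(v) = v. Moreover, any θ as in (i) satisfies sin((Aᵀθ)_e) = ψ(v)_e for every edge e. -/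
open Matrix BigOperators

section PfAux
open Matrix

variable {n m E : ℕ} {B : Matrix (Fin n ⊕ Fin m) (Fin n ⊕ Fin m) ℝ}
  {VG : Fin m → ℝ} {src tgt : Fin E → Fin n ⊕ Fin m}

lemma pf_incA_apply (a : Fin n ⊕ Fin m) (e : Fin E) :
    incA src tgt a e = if src e = a then 1 else if tgt e = a then -1 else 0 := rfl

lemma pf_tmul (hne : ∀ e, src e ≠ tgt e) (θ : Fin n ⊕ Fin m → ℝ) (e : Fin E) :
    ((incA src tgt)ᵀ *ᵥ θ) e = θ (src e) - θ (tgt e) := by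
  have key : ∀ a, (incA src tgt)ᵀ e a * θ a
      = (if src e = a then θ a else 0) + (if tgt e = a then -θ a else 0) := by
    intro a
    by_cases h1 : src e = a <;> by_cases h2 : tgt e = a
    · exact absurd (h1.trans h2.symm) (hne e)
    · simp [Matrix.transpose_apply, pf_incA_apply, h1, h2]
    · simp [Matrix.transpose_apply, pf_incA_apply, h1, h2]
    · simp [Matrix.transpose_apply, pf_incA_apply, h1, h2]
  show ∑ a, (incA src tgt)ᵀ e a * θ a = _
  rw [Finset.sum_congr rfl fun a _ => key a, Finset.sum_add_distrib,
    Finset.sum_ite_eq, Finset.sum_ite_eq]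
  simp [sub_eq_add_neg]

lemma pf_colsum (hne : ∀ e, src e ≠ tgt e) (e : Fin E) :
    ∑ a, incA src tgt a e = 0 := by
  have key : ∀ a, incA src tgt a e
      = (if src e = a then (1:ℝ) else 0) + (if tgt e = a then (-1:ℝ) else 0) := by
    intro a
    by_cases h1 : src e = a <;> by_cases h2 : tgt e = a
    · exact absurd (h1.trans h2.symm) (hne e)
    · simp [pf_incA_apply, h1, h2]
    · simp [pf_incA_apply, h1, h2]
    · simp [pf_incA_apply, h1, h2]
  rw [Finset.sum_congr rfl fun a _ => key a, Finset.sum_add_distrib,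
    Finset.sum_ite_eq, Finset.sum_ite_eq]
  simp

lemma pf_sum_nbrs (hne : ∀ e, src e ≠ tgt e)
    (huniq : ∀ e f : Fin E,
      ((src e = src f ∧ tgt e = tgt f) ∨ (src e = tgt f ∧ tgt e = src f)) → e = f)
    (a : Fin n ⊕ Fin m) (F : (Fin n ⊕ Fin m) → ℝ)
    (hFa : F a = 0) (hFn : ∀ b, b ≠ a → ¬ busJoined src tgt a b → F b = 0) :
    ∑ b, F b
      = ∑ e, (if src e = a then F (tgt e) else if tgt e = a then F (src e) else 0) := by
  classical
  have hL : ∑ b, F b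
      = ∑ b ∈ Finset.univ.filter (fun b => b ≠ a ∧ busJoined src tgt a b), F b := by
    rw [Finset.sum_filter]
    refine Finset.sum_congr rfl fun b _ => ?_
    by_cases h1 : b = a
    · subst h1; simp [hFa]
    · by_cases h2 : busJoined src tgt a b
      · simp [h1, h2]
      · simp [h1, h2, hFn b h1 h2]
  have hR : (∑ e, (if src e = a then F (tgt e) else if tgt e = a then F (src e) else 0))
      = ∑ e ∈ Finset.univ.filter (fun e => src e = a ∨ tgt e = a),
          (if src e = a then F (tgt e) else if tgt e = a then F (src e) else 0) := by
    rw [Finset.sum_filter]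
    refine Finset.sum_congr rfl fun e _ => ?_
    by_cases h1 : src e = a <;> by_cases h2 : tgt e = a <;> simp [h1, h2]
  rw [hL, hR]
  refine (Finset.sum_bij (fun e _ => if src e = a then tgt e else src e) ?_ ?_ ?_ ?_).symm
  · intro e he
    rw [Finset.mem_filter] at he ⊢
    refine ⟨Finset.mem_univ _, ?_, ?_⟩
    · by_cases h1 : src e = a
      · simp only [h1, if_pos]
        exact fun h => hne e (h1.trans h.symm)
      · simp only [h1, if_neg, if_false]
        rcases he.2 with h | h
        · exact absurd h h1
        · exact fun hh => hne e (hh.trans h.symm)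
    · by_cases h1 : src e = a
      · exact ⟨e, Or.inl ⟨h1, by simp [h1]⟩⟩
      · rcases he.2 with h | h
        · exact absurd h h1
        · exact ⟨e, Or.inr ⟨by simp [h1], h⟩⟩
  · intro e1 he1 e2 he2 heq
    rw [Finset.mem_filter] at he1 he2
    by_cases h1 : src e1 = a <;> by_cases h2 : src e2 = a
    · simp only [h1, h2, if_pos] at heq
      exact huniq e1 e2 (Or.inl ⟨h1.trans h2.symm, heq⟩)
    · have ht2 : tgt e2 = a := he2.2.resolve_left h2
      simp only [h1, h2, if_pos, if_neg, if_false] at heq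
      exact huniq e1 e2 (Or.inr ⟨h1.trans ht2.symm, heq⟩)
    · have ht1 : tgt e1 = a := he1.2.resolve_left h1
      simp only [h1, h2, if_pos, if_neg, if_false] at heq
      exact huniq e1 e2 (Or.inr ⟨heq, ht1.trans h2.symm⟩)
    · have ht1 : tgt e1 = a := he1.2.resolve_left h1
      have ht2 : tgt e2 = a := he2.2.resolve_left h2
      simp only [h1, h2, if_neg, if_false] at heq
      exact huniq e1 e2 (Or.inl ⟨heq, ht1.trans ht2.symm⟩)
  · intro b hb
    rw [Finset.mem_filter] at hb
    obtain ⟨-, hba, e, he⟩ := hb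
    rcases he with ⟨hs, ht⟩ | ⟨hs, ht⟩
    · refine ⟨e, Finset.mem_filter.mpr ⟨Finset.mem_univ _, Or.inl hs⟩, ?_⟩
      simp [hs, ht]
    · refine ⟨e, Finset.mem_filter.mpr ⟨Finset.mem_univ _, Or.inr ht⟩, ?_⟩
      have h1 : ¬ src e = a := fun h => hba (hs.symm.trans h)
      simp only [if_neg h1]; exact hs
  · intro e he
    rw [Finset.mem_filter] at he
    by_cases h1 : src e = a
    · simp [h1]
    · have ht : tgt e = a := he.2.resolve_left h1
      simp [h1, ht]

lemma pf_Bsymm (hsym : Bᵀ = B) (a b : Fin n ⊕ Fin m) : B b a = B a b :=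
  congrFun (congrFun hsym a) b

lemma pf_sum_sin (hsym : Bᵀ = B) (hne : ∀ e, src e ≠ tgt e)
    (huniq : ∀ e f : Fin E,
      ((src e = src f ∧ tgt e = tgt f) ∨ (src e = tgt f ∧ tgt e = src f)) → e = f)
    (hBzero : ∀ a b : Fin n ⊕ Fin m, a ≠ b → ¬ busJoined src tgt a b → B a b = 0)
    (V θ : Fin n ⊕ Fin m → ℝ) (a : Fin n ⊕ Fin m) :
    ∑ b, V a * V b * B a b * Real.sin (θ a - θ b)
      = ∑ e, incA src tgt a e *
          (V (src e) * V (tgt e) * B (src e) (tgt e) * Real.sin (θ (src e) - θ (tgt e))) := by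
  have hbj : ∀ b, busJoined src tgt a b → busJoined src tgt b a := by
    rintro b ⟨e, h | h⟩
    exacts [⟨e, Or.inr h⟩, ⟨e, Or.inl h⟩]
  rw [pf_sum_nbrs hne huniq a (fun b => V a * V b * B a b * Real.sin (θ a - θ b))
    (by simp) (fun b h1 h2 => by simp only [hBzero a b (Ne.symm h1) h2]; ring)]
  refine Finset.sum_congr rfl fun e _ => ?_
  by_cases h1 : src e = a
  · subst h1
    rw [if_pos rfl, pf_incA_apply, if_pos rfl, one_mul]
  · by_cases h2 : tgt e = a
    · subst h2
      rw [if_neg h1, if_pos rfl, pf_incA_apply, if_neg h1, if_pos rfl,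
        pf_Bsymm hsym (src e) (tgt e),
        show θ (tgt e) - θ (src e) = -(θ (src e) - θ (tgt e)) by ring, Real.sin_neg]
      ring
    · simp [pf_incA_apply, h1, h2]

lemma pf_sum_cos (hsym : Bᵀ = B) (hne : ∀ e, src e ≠ tgt e)
    (huniq : ∀ e f : Fin E,
      ((src e = src f ∧ tgt e = tgt f) ∨ (src e = tgt f ∧ tgt e = src f)) → e = f)
    (hBzero : ∀ a b : Fin n ⊕ Fin m, a ≠ b → ¬ busJoined src tgt a b → B a b = 0)
    (V θ : Fin n ⊕ Fin m → ℝ) (a : Fin n ⊕ Fin m) :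
    ∑ b, V a * V b * B a b * (1 - Real.cos (θ a - θ b))
      = ∑ e, |incA src tgt a e| *
          (V (src e) * V (tgt e) * B (src e) (tgt e) * (1 - Real.cos (θ (src e) - θ (tgt e)))) := by
  rw [pf_sum_nbrs hne huniq a (fun b => V a * V b * B a b * (1 - Real.cos (θ a - θ b)))
    (by simp) (fun b h1 h2 => by simp only [hBzero a b (Ne.symm h1) h2]; ring)]
  refine Finset.sum_congr rfl fun e _ => ?_
  by_cases h1 : src e = a
  · subst h1
    rw [if_pos rfl, pf_incA_apply, if_pos rfl, abs_one, one_mul]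
  · by_cases h2 : tgt e = a
    · subst h2
      rw [if_neg h1, if_pos rfl, pf_incA_apply, if_neg h1, if_pos rfl,
        pf_Bsymm hsym (src e) (tgt e),
        show θ (tgt e) - θ (src e) = -(θ (src e) - θ (tgt e)) by ring, Real.cos_neg,
        abs_neg, abs_one, one_mul]
      ring
    · simp [pf_incA_apply, h1, h2]

end PfAux
section PfAux2
open Matrix

variable {n m E : ℕ} {B : Matrix (Fin n ⊕ Fin m) (Fin n ⊕ Fin m) ℝ}
  {VG : Fin m → ℝ} {src tgt : Fin E → Fin n ⊕ Fin m}

lemma pf_BLL_isUnit (hBLL : (-(BLL B)).PosDef) : IsUnit (BLL B).det := by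
  have h1 : IsUnit (-(BLL B)) := hBLL.isUnit
  have h2 : IsUnit (BLL B) := by simpa using h1.neg
  exact (Matrix.isUnit_iff_isUnit_det _).mp h2

lemma pf_VLstar_eq (hBLL : (-(BLL B)).PosDef) :
    (BLL B) *ᵥ (VLstar B VG) = -((BLG B) *ᵥ VG) := by
  unfold VLstar
  rw [Matrix.mulVec_neg, Matrix.mulVec_mulVec,
    Matrix.mul_nonsing_inv _ (pf_BLL_isUnit hBLL), Matrix.one_mulVec]

lemma pf_B_offdiag_nonneg
    (hBpos : ∀ a b : Fin n ⊕ Fin m, busJoined src tgt a b → 0 < B a b)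
    (hBzero : ∀ a b : Fin n ⊕ Fin m, a ≠ b → ¬ busJoined src tgt a b → B a b = 0)
    {a b : Fin n ⊕ Fin m} (h : a ≠ b) : 0 ≤ B a b := by
  by_cases hj : busJoined src tgt a b
  · exact (hBpos a b hj).le
  · exact (hBzero a b h hj).ge

lemma pf_VLstar_pos (hm : 0 < m)
    (hBpos : ∀ a b : Fin n ⊕ Fin m, busJoined src tgt a b → 0 < B a b)
    (hBzero : ∀ a b : Fin n ⊕ Fin m, a ≠ b → ¬ busJoined src tgt a b → B a b = 0)
    (hBLL : (-(BLL B)).PosDef)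
    (hVG : ∀ j, 0 < VG j)
    (hconn : ∀ x : Fin n ⊕ Fin m → ℝ,
      (incA src tgt)ᵀ *ᵥ x = 0 ↔ ∃ c : ℝ, x = fun _ => c)
    (hne : ∀ e, src e ≠ tgt e) :
    ∀ i, 0 < VLstar B VG i := by
  classical
  set x := VLstar B VG with hxdef
  have hrow : ∀ i, ∑ j, (-(BLL B)) i j * x j = ∑ g, B (Sum.inl i) (Sum.inr g) * VG g := by
    intro i
    have h1 : (BLL B *ᵥ x) i = (-((BLG B) *ᵥ VG)) i := congrFun (pf_VLstar_eq hBLL) i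
    simp only [Matrix.mulVec, dotProduct, Pi.neg_apply] at h1
    simp only [Matrix.neg_apply, neg_mul]
    rw [Finset.sum_neg_distrib, h1, neg_neg]
    rfl
  have hr : ∀ i, 0 ≤ ∑ g, B (Sum.inl i) (Sum.inr g) * VG g := by
    intro i
    refine Finset.sum_nonneg fun g _ => mul_nonneg ?_ (hVG g).le
    exact pf_B_offdiag_nonneg hBpos hBzero (by simp)
  -- nonnegativity
  have hy0eq : (fun i => min (x i) 0) = 0 := by
    by_contra hyne
    set y : Fin n → ℝ := fun i => min (x i) 0 with hy
    set z : Fin n → ℝ := fun i => max (x i) 0 with hz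
    have hy0 : ∀ i, y i ≤ 0 := fun i => min_le_right _ _
    have hz0 : ∀ i, 0 ≤ z i := fun i => le_max_right _ _
    have hyz0 : ∀ i, y i * z i = 0 := by
      intro i
      rcases le_or_gt (x i) 0 with h | h
      · have : z i = 0 := max_eq_right h
        rw [this, mul_zero]
      · have : y i = 0 := min_eq_right h.le
        rw [this, zero_mul]
    have hpos := hBLL.dotProduct_mulVec_pos hyne
    have hsy : star y = y := by funext i; simp
    rw [hsy] at hpos
    have hyxz : y = x - z := by
      funext i
      have := min_add_max (x i) 0
      simp only [hy, hz, Pi.sub_apply]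
      linarith
    have hsplit : (-(BLL B)) *ᵥ y = (-(BLL B)) *ᵥ x - (-(BLL B)) *ᵥ z := by
      rw [hyxz, Matrix.mulVec_sub]
    have h1 : y ⬝ᵥ ((-(BLL B)) *ᵥ x) ≤ 0 := by
      simp only [dotProduct]
      refine Finset.sum_nonpos fun i _ => ?_
      have hv : ((-(BLL B)) *ᵥ x) i = ∑ g, B (Sum.inl i) (Sum.inr g) * VG g := by
        simpa only [Matrix.mulVec, dotProduct] using hrow i
      rw [hv]
      exact mul_nonpos_iff.mpr (Or.inr ⟨hy0 i, hr i⟩)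
    have h2 : 0 ≤ y ⬝ᵥ ((-(BLL B)) *ᵥ z) := by
      simp only [dotProduct, Matrix.mulVec]
      rw [Finset.sum_congr rfl fun i _ => Finset.mul_sum Finset.univ _ (y i)]
      refine Finset.sum_nonneg fun i _ => Finset.sum_nonneg fun j _ => ?_
      rcases eq_or_ne j i with h | h
      · subst h
        rw [show y j * ((-(BLL B)) j j * z j) = (-(BLL B)) j j * (y j * z j) by ring,
          hyz0 j, mul_zero]
      · have hMij : (-(BLL B)) i j ≤ 0 := by
          simp only [Matrix.neg_apply, neg_nonpos]
          exact pf_B_offdiag_nonneg hBpos hBzero (by simp [h.symm])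
        have hMz : (-(BLL B)) i j * z j ≤ 0 := mul_nonpos_iff.mpr (Or.inr ⟨hMij, hz0 j⟩)
        nlinarith [mul_nonneg (neg_nonneg.mpr (hy0 i)) (neg_nonneg.mpr hMz)]
    rw [hsplit, dotProduct_sub] at hpos
    linarith
  have hxnn : ∀ i, 0 ≤ x i := by
    intro i
    have := congrFun hy0eq i
    simp only [Pi.zero_apply] at this
    exact min_eq_right_iff.mp this
  -- key zero-propagation
  have hkey : ∀ i, x i = 0 →
      (∀ g, B (Sum.inl i) (Sum.inr g) = 0) ∧ ∀ j, B (Sum.inl i) (Sum.inl j) * x j = 0 := by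
    intro i hxi
    have hL : ∀ j, j ∈ Finset.univ → (-(BLL B)) i j * x j ≤ 0 := by
      intro j _
      rcases eq_or_ne j i with h | h
      · subst h; rw [hxi, mul_zero]
      · refine mul_nonpos_iff.mpr (Or.inr ⟨?_, hxnn j⟩)
        simp only [Matrix.neg_apply, neg_nonpos]
        exact pf_B_offdiag_nonneg hBpos hBzero (by simp [h.symm])
    have hL0 : ∑ j, (-(BLL B)) i j * x j = 0 :=
      le_antisymm (Finset.sum_nonpos hL) (by rw [hrow i]; exact hr i)
    have hR0 : ∑ g, B (Sum.inl i) (Sum.inr g) * VG g = 0 := by rw [← hrow i, hL0]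
    constructor
    · intro g
      have := (Finset.sum_eq_zero_iff_of_nonneg fun g _ =>
        mul_nonneg (pf_B_offdiag_nonneg hBpos hBzero (by simp)) (hVG g).le).mp hR0 g
        (Finset.mem_univ g)
      exact (mul_eq_zero.mp this).resolve_right (hVG g).ne'
    · intro j
      have := (Finset.sum_eq_zero_iff_of_nonpos hL).mp hL0 j (Finset.mem_univ j)
      have h2 : -(B (Sum.inl i) (Sum.inl j) * x j) = 0 := by
        simpa only [Matrix.neg_apply, neg_mul, BLL, Matrix.of_apply] using this
      exact neg_eq_zero.mp h2
  have hclaim : ∀ (i : Fin n) (b : Fin n ⊕ Fin m), busJoined src tgt (Sum.inl i) b →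
      x i = 0 → ∃ j, b = Sum.inl j ∧ x j = 0 := by
    intro i b hj hxi
    have hBb := hBpos _ _ hj
    rcases b with j | g
    · refine ⟨j, rfl, ?_⟩
      have := (hkey i hxi).2 j
      exact (mul_eq_zero.mp this).resolve_left hBb.ne'
    · exact absurd ((hkey i hxi).1 g) hBb.ne'
  -- no zero entries
  have hnz : ∀ i, x i ≠ 0 := by
    intro i0 hx0
    set w : Fin n ⊕ Fin m → ℝ :=
      Sum.elim (fun i => if x i = 0 then (1:ℝ) else 0) (fun _ => 0) with hw
    have hAw : (incA src tgt)ᵀ *ᵥ w = 0 := by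
      funext e
      rw [pf_tmul hne, Pi.zero_apply, sub_eq_zero]
      rcases hse : src e with i | g <;> rcases hte : tgt e with j | g'
      · simp only [hw, Sum.elim_inl]
        by_cases h1 : x i = 0
        · obtain ⟨j', hj', hxj'⟩ := hclaim i (Sum.inl j) ⟨e, Or.inl ⟨hse, hte⟩⟩ h1
          obtain rfl : j' = j := by simpa using hj'.symm
          simp [h1, hxj']
        · by_cases h2 : x j = 0
          · obtain ⟨i', hi', hxi'⟩ := hclaim j (Sum.inl i) ⟨e, Or.inr ⟨hse, hte⟩⟩ h2
            obtain rfl : i' = i := by simpa using hi'.symm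
            exact absurd hxi' h1
          · simp [h1, h2]
      · simp only [hw, Sum.elim_inl, Sum.elim_inr]
        by_cases h1 : x i = 0
        · obtain ⟨j', hj', -⟩ := hclaim i (Sum.inr g') ⟨e, Or.inl ⟨hse, hte⟩⟩ h1
          exact absurd hj' (by simp)
        · simp [h1]
      · simp only [hw, Sum.elim_inl, Sum.elim_inr]
        by_cases h1 : x j = 0
        · obtain ⟨j', hj', -⟩ := hclaim j (Sum.inr g) ⟨e, Or.inr ⟨hse, hte⟩⟩ h1
          exact absurd hj' (by simp)
        · simp [h1]
      · simp [hw]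
    obtain ⟨c, hc⟩ := (hconn w).mp hAw
    have h1 := congrFun hc (Sum.inr ⟨0, hm⟩)
    have h2 := congrFun hc (Sum.inl i0)
    simp only [hw, Sum.elim_inr, Sum.elim_inl, hx0, if_pos] at h1 h2
    rw [← h1] at h2
    exact one_ne_zero h2
  exact fun i => (hxnn i).lt_of_ne (Ne.symm (hnz i))

lemma pf_Vstar_pos (hm : 0 < m)
    (hBpos : ∀ a b : Fin n ⊕ Fin m, busJoined src tgt a b → 0 < B a b)
    (hBzero : ∀ a b : Fin n ⊕ Fin m, a ≠ b → ¬ busJoined src tgt a b → B a b = 0)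
    (hBLL : (-(BLL B)).PosDef)
    (hVG : ∀ j, 0 < VG j)
    (hconn : ∀ x : Fin n ⊕ Fin m → ℝ,
      (incA src tgt)ᵀ *ᵥ x = 0 ↔ ∃ c : ℝ, x = fun _ => c)
    (hne : ∀ e, src e ≠ tgt e) :
    ∀ a, 0 < Vstar B VG a := by
  rintro (i | g)
  · exact pf_VLstar_pos hm hBpos hBzero hBLL hVG hconn hne i
  · exact hVG g

end PfAux2
section PfAux3
open Matrix

/-- Branch stiffness entries. -/
noncomputable def pfD {n m E : ℕ} (B : Matrix (Fin n ⊕ Fin m) (Fin n ⊕ Fin m) ℝ)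
    (VG : Fin m → ℝ) (src tgt : Fin E → Fin n ⊕ Fin m) : Fin E → ℝ :=
  fun e => Vstar B VG (src e) * Vstar B VG (tgt e) * B (src e) (tgt e)

/-- Extension of `v` by ones on generators. -/
def pfW {n m : ℕ} (v : Fin n → ℝ) : Fin n ⊕ Fin m → ℝ := Sum.elim v (fun _ => 1)

variable {n m E : ℕ} {B : Matrix (Fin n ⊕ Fin m) (Fin n ⊕ Fin m) ℝ}
  {VG : Fin m → ℝ} {src tgt : Fin E → Fin n ⊕ Fin m}

lemma pf_Dmat_eq : Dmat B VG src tgt = Matrix.diagonal (pfD B VG src tgt) := rfl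

lemma pf_hvec_eq (v : Fin n → ℝ) (e : Fin E) :
    hvec src tgt v e = pfW (m := m) v (src e) * pfW (m := m) v (tgt e) := by
  rcases hse : src e with i | g <;> rcases hte : tgt e with j | g' <;>
    simp [hvec, hse, hte, pfW]

lemma pf_pfW_pos {v : Fin n → ℝ} (hv : ∀ i, 0 < v i) (a : Fin n ⊕ Fin m) :
    0 < pfW (m := m) v a := by
  rcases a with i | g <;> simp [pfW]
  exact hv i

lemma pf_hvec_pos {v : Fin n → ℝ} (hv : ∀ i, 0 < v i) (e : Fin E) :
    0 < hvec src tgt v e := by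
  rw [pf_hvec_eq]
  exact mul_pos (pf_pfW_pos hv _) (pf_pfW_pos hv _)

lemma pf_AtA_isUnit (hacyclic : ∀ p : Fin E → ℝ, incA src tgt *ᵥ p = 0 → p = 0) :
    IsUnit ((incA src tgt)ᵀ * incA src tgt).det := by
  rw [isUnit_iff_ne_zero]
  intro hdet
  obtain ⟨p, hp, h0⟩ := Matrix.exists_mulVec_eq_zero_iff.mpr hdet
  refine hp (hacyclic p (dotProduct_self_eq_zero.mp ?_))
  calc (incA src tgt *ᵥ p) ⬝ᵥ (incA src tgt *ᵥ p)
      = (p ᵥ* (incA src tgt)ᵀ) ⬝ᵥ (incA src tgt *ᵥ p) := by rw [vecMul_transpose]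
    _ = p ⬝ᵥ ((incA src tgt)ᵀ *ᵥ (incA src tgt *ᵥ p)) := (dotProduct_mulVec _ _ _).symm
    _ = p ⬝ᵥ (((incA src tgt)ᵀ * incA src tgt) *ᵥ p) := by rw [Matrix.mulVec_mulVec]
    _ = 0 := by rw [h0, dotProduct_zero]

lemma pf_exists_theta (hacyclic : ∀ p : Fin E → ℝ, incA src tgt *ᵥ p = 0 → p = 0)
    (δ : Fin E → ℝ) : ∃ θ : Fin n ⊕ Fin m → ℝ, (incA src tgt)ᵀ *ᵥ θ = δ := by
  refine ⟨incA src tgt *ᵥ (((incA src tgt)ᵀ * incA src tgt)⁻¹ *ᵥ δ), ?_⟩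
  rw [Matrix.mulVec_mulVec, Matrix.mulVec_mulVec,
    Matrix.mul_nonsing_inv _ (pf_AtA_isUnit hacyclic), Matrix.one_mulVec]

lemma pf_pflow_eq (hn : 0 < n) (hne : ∀ e, src e ≠ tgt e)
    (hacyclic : ∀ p : Fin E → ℝ, incA src tgt *ᵥ p = 0 → p = 0)
    (hconn : ∀ x : Fin n ⊕ Fin m → ℝ,
      (incA src tgt)ᵀ *ᵥ x = 0 ↔ ∃ c : ℝ, x = fun _ => c)
    {P : Fin n ⊕ Fin m → ℝ} (hP : ∑ a, P a = 0) :
    incA src tgt *ᵥ pflow src tgt P = P := by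
  classical
  set A := incA src tgt with hA
  set q : Fin E → ℝ := ((Aᵀ * A)⁻¹ * Aᵀ) *ᵥ P with hq
  have hAq : pflow src tgt P = q := rfl
  have hAtr : Aᵀ *ᵥ (P - A *ᵥ q) = 0 := by
    rw [Matrix.mulVec_sub, sub_eq_zero, hq, Matrix.mulVec_mulVec, Matrix.mulVec_mulVec, ← Matrix.mul_assoc,
      Matrix.mul_nonsing_inv _ (pf_AtA_isUnit hacyclic), Matrix.one_mul]
  obtain ⟨c, hc⟩ := (hconn _).mp hAtr
  have hsumA : ∑ a, (A *ᵥ q) a = 0 := by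
    have h1 : ∑ a, (A *ᵥ q) a = ∑ e, (∑ a, A a e) * q e := by
      simp only [Matrix.mulVec, dotProduct]
      rw [Finset.sum_comm]
      exact Finset.sum_congr rfl fun e _ => by rw [Finset.sum_mul]
    rw [h1]
    refine Finset.sum_eq_zero fun e _ => ?_
    rw [hA, pf_colsum hne, zero_mul]
  have hsum : ∑ a, (P - A *ᵥ q) a = 0 := by
    simp only [Pi.sub_apply, Finset.sum_sub_distrib, hP, hsumA, sub_zero]
  rw [hc] at hsum
  simp only [Finset.sum_const, nsmul_eq_mul, Finset.card_univ, Fintype.card_sum,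
    Fintype.card_fin] at hsum
  have hc0 : c = 0 := by
    rcases mul_eq_zero.mp hsum with h | h
    · exact absurd h (Nat.cast_ne_zero.mpr (by omega))
    · exact h
  have h0 : P - A *ᵥ q = 0 := by
    funext a
    have h2 := congrFun hc a
    simp only [Pi.sub_apply] at h2 ⊢
    simp only [Pi.zero_apply]
    rw [h2, hc0]
  rw [hAq]
  exact (sub_eq_zero.mp h0).symm

lemma pf_diag_inv {ι : Type*} [Fintype ι] [DecidableEq ι] {d : ι → ℝ} (hd : ∀ i, d i ≠ 0) :
    (Matrix.diagonal d)⁻¹ = Matrix.diagonal (fun i => (d i)⁻¹) := by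
  apply Matrix.inv_eq_right_inv
  rw [Matrix.diagonal_mul_diagonal,
    show (fun i => d i * (d i)⁻¹) = fun _ => (1:ℝ) from funext fun i => mul_inv_cancel₀ (hd i),
    Matrix.diagonal_one]

lemma pf_psif_eq {P : Fin n ⊕ Fin m → ℝ} {v : Fin n → ℝ}
    (hh : ∀ e, hvec src tgt v e ≠ 0) (hD : ∀ e, pfD B VG src tgt e ≠ 0) (e : Fin E) :
    psif B VG src tgt P v e
      = (hvec src tgt v e * pfD B VG src tgt e)⁻¹ * pflow src tgt P e := by
  unfold psif
  rw [pf_Dmat_eq, pf_diag_inv hh, pf_diag_inv hD, Matrix.diagonal_mul_diagonal,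
    Matrix.mulVec_diagonal, mul_inv]

end PfAux3
section PfAux4
open Matrix

variable {n m E : ℕ} {B : Matrix (Fin n ⊕ Fin m) (Fin n ⊕ Fin m) ℝ}
  {VG : Fin m → ℝ} {src tgt : Fin E → Fin n ⊕ Fin m}

lemma pf_scalar1 {a k w : ℝ} (ha : a ≠ 0) : 1 - a⁻¹ * k = w ↔ k = a * (1 - w) := by
  constructor
  · intro h
    have h2 : a * (1 - a⁻¹ * k) = a * w := by rw [h]
    rw [mul_sub, mul_one, ← mul_assoc, mul_inv_cancel₀ ha, one_mul] at h2
    rw [mul_sub, mul_one]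
    linarith
  · intro h
    subst h
    have h2 : a⁻¹ * (a * (1 - w)) = 1 - w := by
      rw [← mul_assoc, inv_mul_cancel₀ ha, one_mul]
    rw [h2]
    ring

lemma pf_Smat_inv (hBLL : (-(BLL B)).PosDef) (hx : ∀ i, VLstar B VG i ≠ 0) :
    (Smat B VG)⁻¹
      = (4:ℝ) • (Matrix.diagonal (fun i => (VLstar B VG i)⁻¹) * (BLL B)⁻¹ *
          Matrix.diagonal (fun i => (VLstar B VG i)⁻¹)) := by
  apply Matrix.inv_eq_right_inv
  unfold Smat
  rw [Matrix.smul_mul, Matrix.mul_smul, smul_smul]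
  norm_num
  have hDx : Matrix.diagonal (VLstar B VG) * Matrix.diagonal (fun i => (VLstar B VG i)⁻¹)
      = (1 : Matrix (Fin n) (Fin n) ℝ) := by
    rw [Matrix.diagonal_mul_diagonal,
      show (fun i => VLstar B VG i * (VLstar B VG i)⁻¹) = fun _ => (1:ℝ) from
        funext fun i => mul_inv_cancel₀ (hx i), Matrix.diagonal_one]
  have hB1 : BLL B * (BLL B)⁻¹ = 1 := Matrix.mul_nonsing_inv _ (pf_BLL_isUnit hBLL)
  have hcol : ∀ K : Matrix (Fin n) (Fin n) ℝ,
      Matrix.diagonal (VLstar B VG) * (Matrix.diagonal (fun i => (VLstar B VG i)⁻¹) * K) = K :=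
    fun K => by rw [← Matrix.mul_assoc, hDx, Matrix.one_mul]
  have hcolB : ∀ K : Matrix (Fin n) (Fin n) ℝ, BLL B * ((BLL B)⁻¹ * K) = K :=
    fun K => by rw [← Matrix.mul_assoc, hB1, Matrix.one_mul]
  simp only [Matrix.mul_assoc]
  rw [hcol, hcolB, hDx]

lemma pf_quarter_Sinv (hBLL : (-(BLL B)).PosDef) (hx : ∀ i, VLstar B VG i ≠ 0)
    (w : Fin n → ℝ) :
    (4⁻¹ : ℝ) • ((Smat B VG)⁻¹ *ᵥ w)
      = fun i => (VLstar B VG i)⁻¹ *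
          ((BLL B)⁻¹ *ᵥ fun j => (VLstar B VG j)⁻¹ * w j) i := by
  rw [pf_Smat_inv hBLL hx, Matrix.smul_mulVec, smul_smul]
  norm_num
  rw [Matrix.mul_assoc, ← Matrix.mulVec_mulVec, ← Matrix.mulVec_mulVec]
  have hdw : (Matrix.diagonal (fun j => (VLstar B VG j)⁻¹) *ᵥ w)
      = fun j => (VLstar B VG j)⁻¹ * w j := by
    funext j; rw [Matrix.mulVec_diagonal]
  rw [hdw]
  funext i
  rw [Matrix.mulVec_diagonal]

lemma pf_fppf_fixed_iff {P : Fin n ⊕ Fin m → ℝ} {QL : Fin n → ℝ} {v : Fin n → ℝ}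
    (hBLL : (-(BLL B)).PosDef) (hxpos : ∀ i, 0 < VLstar B VG i) (hv : ∀ i, 0 < v i) :
    fppf B VG src tgt P QL v = v ↔
      ∀ i, QL i =
        ((absAL src tgt * Dmat B VG src tgt * Matrix.diagonal (hvec src tgt v)) *ᵥ
            uvec B VG src tgt P v) i
          + VLstar B VG i * v i *
            ((BLL B) *ᵥ fun j => VLstar B VG j * (1 - v j)) i := by
  classical
  set x := VLstar B VG with hxdef
  have hx : ∀ i, x i ≠ 0 := fun i => (hxpos i).ne'
  have hvne : ∀ i, v i ≠ 0 := fun i => (hv i).ne'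
  set t : Fin n → ℝ :=
    (absAL src tgt * Dmat B VG src tgt * Matrix.diagonal (hvec src tgt v)) *ᵥ
      uvec B VG src tgt P v with ht
  set c1 : Fin n → ℝ := fun j => (x j)⁻¹ * (QL j * (v j)⁻¹) with hc1
  set c2 : Fin n → ℝ := fun j => (x j)⁻¹ * ((v j)⁻¹ * t j) with hc2
  have hterm2 : (4⁻¹ : ℝ) •
      (((Smat B VG)⁻¹ * Matrix.diagonal QL * (Matrix.diagonal v)⁻¹) *ᵥ fun _ => (1:ℝ))
      = fun i => (x i)⁻¹ * ((BLL B)⁻¹ *ᵥ c1) i := by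
    rw [pf_diag_inv hvne, Matrix.mul_assoc, ← Matrix.mulVec_mulVec,
      Matrix.diagonal_mul_diagonal, ]
    have : (Matrix.diagonal (fun i => QL i * (v i)⁻¹) *ᵥ fun _ => (1:ℝ))
        = fun j => QL j * (v j)⁻¹ := by
      funext j; rw [Matrix.mulVec_diagonal, mul_one]
    rw [this, pf_quarter_Sinv hBLL hx]
  have hterm3 : (4⁻¹ : ℝ) •
      (((Smat B VG)⁻¹ * (Matrix.diagonal v)⁻¹ * absAL src tgt * Dmat B VG src tgt *
          Matrix.diagonal (hvec src tgt v)) *ᵥ uvec B VG src tgt P v)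
      = fun i => (x i)⁻¹ * ((BLL B)⁻¹ *ᵥ c2) i := by
    rw [pf_diag_inv hvne,
      show (Smat B VG)⁻¹ * Matrix.diagonal (fun i => (v i)⁻¹) * absAL src tgt *
          Dmat B VG src tgt * Matrix.diagonal (hvec src tgt v)
        = (Smat B VG)⁻¹ * (Matrix.diagonal (fun i => (v i)⁻¹) *
            (absAL src tgt * Dmat B VG src tgt * Matrix.diagonal (hvec src tgt v))) by
          simp only [Matrix.mul_assoc],
      ← Matrix.mulVec_mulVec, ← Matrix.mulVec_mulVec, ← ht]
    have : (Matrix.diagonal (fun i => (v i)⁻¹) *ᵥ t) = fun j => (v j)⁻¹ * t j := by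
      funext j; rw [Matrix.mulVec_diagonal]
    rw [this, pf_quarter_Sinv hBLL hx]
  have hfv : fppf B VG src tgt P QL v
      = fun i => 1 - (x i)⁻¹ * ((BLL B)⁻¹ *ᵥ (c1 - c2)) i := by
    unfold fppf
    funext i
    rw [Pi.add_apply, Pi.sub_apply]
    rw [congrFun hterm2 i, congrFun hterm3 i]
    rw [Matrix.mulVec_sub]
    simp only [Pi.sub_apply]
    ring
  rw [hfv]
  have hB1 : BLL B * (BLL B)⁻¹ = 1 := Matrix.mul_nonsing_inv _ (pf_BLL_isUnit hBLL)
  have hB2 : (BLL B)⁻¹ * BLL B = 1 := Matrix.nonsing_inv_mul _ (pf_BLL_isUnit hBLL)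
  constructor
  · intro h i
    have hvec0 : (BLL B)⁻¹ *ᵥ (c1 - c2) = fun k => x k * (1 - v k) := by
      funext k
      exact (pf_scalar1 (hx k)).mp (congrFun h k)
    have hg : c1 - c2 = (BLL B) *ᵥ fun k => x k * (1 - v k) := by
      rw [← hvec0, Matrix.mulVec_mulVec, hB1, Matrix.one_mulVec]
    have := congrFun hg i
    simp only [Pi.sub_apply, hc1, hc2] at this
    have hxi := hx i
    have hvi := hvne i
    field_simp at this
    linarith
  · intro h
    funext i
    rw [pf_scalar1 (hx i)]
    have hg : c1 - c2 = (BLL B) *ᵥ fun k => x k * (1 - v k) := by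
      funext j
      simp only [Pi.sub_apply, hc1, hc2]
      have := h j
      have hxj := hx j
      have hvj := hvne j
      field_simp
      linarith
    rw [hg, Matrix.mulVec_mulVec, hB2, Matrix.one_mulVec]

lemma pf_t_apply {v : Fin n → ℝ} (u' : Fin E → ℝ) (i : Fin n) :
    ((absAL src tgt * Dmat B VG src tgt * Matrix.diagonal (hvec src tgt v)) *ᵥ u') i
      = ∑ e, |incA src tgt (Sum.inl i) e| *
          (pfD B VG src tgt e * hvec src tgt v e * u' e) := by
  rw [Matrix.mul_assoc, ← Matrix.mulVec_mulVec, ← Matrix.mulVec_mulVec]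
  have h1 : Matrix.diagonal (hvec src tgt v) *ᵥ u' = fun e => hvec src tgt v e * u' e := by
    funext e; rw [Matrix.mulVec_diagonal]
  have h2 : Dmat B VG src tgt *ᵥ (fun e => hvec src tgt v e * u' e)
      = fun e => pfD B VG src tgt e * (hvec src tgt v e * u' e) := by
    funext e; rw [pf_Dmat_eq, Matrix.mulVec_diagonal]
  rw [h1, h2]
  simp only [Matrix.mulVec, dotProduct]
  exact Finset.sum_congr rfl fun e _ => by unfold absAL; rw [Matrix.of_apply]; ring

end PfAux4
section PfAux5
open Matrix

variable {n m E : ℕ} {B : Matrix (Fin n ⊕ Fin m) (Fin n ⊕ Fin m) ℝ}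
  {VG : Fin m → ℝ} {src tgt : Fin E → Fin n ⊕ Fin m}

lemma pf_react_id (hsym : Bᵀ = B) (hne : ∀ e, src e ≠ tgt e)
    (huniq : ∀ e f : Fin E,
      ((src e = src f ∧ tgt e = tgt f) ∨ (src e = tgt f ∧ tgt e = src f)) → e = f)
    (hBzero : ∀ a b : Fin n ⊕ Fin m, a ≠ b → ¬ busJoined src tgt a b → B a b = 0)
    (hBLL : (-(BLL B)).PosDef)
    {P : Fin n ⊕ Fin m → ℝ} {v : Fin n → ℝ}
    (θ : Fin n ⊕ Fin m → ℝ)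
    (hcosu : ∀ e, 1 - Real.cos (θ (src e) - θ (tgt e)) = uvec B VG src tgt P v e)
    (i : Fin n) :
    -(∑ b, Sum.elim (fun k => VLstar B VG k * v k) VG (Sum.inl i)
        * Sum.elim (fun k => VLstar B VG k * v k) VG b
        * B (Sum.inl i) b * Real.cos (θ (Sum.inl i) - θ b))
      = ((absAL src tgt * Dmat B VG src tgt * Matrix.diagonal (hvec src tgt v)) *ᵥ
            uvec B VG src tgt P v) i
        + VLstar B VG i * v i * ((BLL B) *ᵥ fun k => VLstar B VG k * (1 - v k)) i := by
  classical
  set V : Fin n ⊕ Fin m → ℝ := Sum.elim (fun k => VLstar B VG k * v k) VG with hVdef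
  set x := VLstar B VG with hxdef
  have hVa : ∀ a, V a = Vstar B VG a * pfW (m := m) v a := by
    rintro (j | g) <;> simp [hVdef, pfW, Vstar, hxdef]
  have hVV : ∀ e, V (src e) * V (tgt e) * B (src e) (tgt e)
      = pfD B VG src tgt e * hvec src tgt v e := by
    intro e; rw [hVa, hVa, pf_hvec_eq]; unfold pfD; ring
  have hsplit : -(∑ b, V (Sum.inl i) * V b * B (Sum.inl i) b * Real.cos (θ (Sum.inl i) - θ b))
      = (∑ b, V (Sum.inl i) * V b * B (Sum.inl i) b * (1 - Real.cos (θ (Sum.inl i) - θ b)))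
        - ∑ b, V (Sum.inl i) * V b * B (Sum.inl i) b := by
    rw [← Finset.sum_sub_distrib, ← Finset.sum_neg_distrib]
    exact Finset.sum_congr rfl fun b _ => by ring
  have hterm1 : (∑ b, V (Sum.inl i) * V b * B (Sum.inl i) b
        * (1 - Real.cos (θ (Sum.inl i) - θ b)))
      = ((absAL src tgt * Dmat B VG src tgt * Matrix.diagonal (hvec src tgt v)) *ᵥ
          uvec B VG src tgt P v) i := by
    rw [pf_sum_cos hsym hne huniq hBzero V θ (Sum.inl i), pf_t_apply]
    exact Finset.sum_congr rfl fun e _ => by rw [hVV e, hcosu e]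
  have hsum1 : ((BLL B) *ᵥ fun k => x k * (1 - v k)) i
      = (∑ j, B (Sum.inl i) (Sum.inl j) * x j)
        - ∑ j, B (Sum.inl i) (Sum.inl j) * (x j * v j) := by
    show (∑ j, BLL B i j * (x j * (1 - v j))) = _
    rw [← Finset.sum_sub_distrib]
    exact Finset.sum_congr rfl fun j _ => by
      show B (Sum.inl i) (Sum.inl j) * _ = _; ring
  have hsum2 : (∑ j, B (Sum.inl i) (Sum.inl j) * x j)
      = -∑ g, B (Sum.inl i) (Sum.inr g) * VG g := by
    have h := congrFun (pf_VLstar_eq (VG := VG) hBLL) i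
    simp only [Matrix.mulVec, dotProduct, Pi.neg_apply] at h
    exact h
  have hterm2 : ∑ b, V (Sum.inl i) * V b * B (Sum.inl i) b
      = -(x i * v i * ((BLL B) *ᵥ fun k => x k * (1 - v k)) i) := by
    rw [hsum1, hsum2, Fintype.sum_sum_type]
    have e1 : ∑ j, V (Sum.inl i) * V (Sum.inl j) * B (Sum.inl i) (Sum.inl j)
        = x i * v i * ∑ j, B (Sum.inl i) (Sum.inl j) * (x j * v j) := by
      rw [Finset.mul_sum]
      exact Finset.sum_congr rfl fun j _ => by
        simp only [hVdef, Sum.elim_inl]; ring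
    have e2 : ∑ g, V (Sum.inl i) * V (Sum.inr g) * B (Sum.inl i) (Sum.inr g)
        = x i * v i * ∑ g, B (Sum.inl i) (Sum.inr g) * VG g := by
      rw [Finset.mul_sum]
      exact Finset.sum_congr rfl fun g _ => by
        simp only [hVdef, Sum.elim_inl, Sum.elim_inr]; ring
    rw [e1, e2]
    ring
  rw [hsplit, hterm1, hterm2]
  ring

end PfAux5

/-- Fixed-point power flow for radial networks (Corollary 2 of the paper):
fix positive scaled voltages v and set V_L = diag(V_L*) v. There exists θ with
branch-wise angle differences at most π/2 in absolute value such that (θ, V_L)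
solves the lossless power flow equations iff |ψ(v)_e| ≤ 1 on every branch and
f(v) = v; moreover, any such θ satisfies sin((Aᵀθ)_e) = ψ(v)_e on every branch. -/
theorem stmt15 {n m E : ℕ} (hn : 0 < n) (hm : 0 < m)
    (B : Matrix (Fin n ⊕ Fin m) (Fin n ⊕ Fin m) ℝ)
    (VG : Fin m → ℝ)
    (src tgt : Fin E → Fin n ⊕ Fin m)
    (hsym : Bᵀ = B)
    (hne : ∀ e : Fin E, src e ≠ tgt e)
    (huniq : ∀ e f : Fin E,
      ((src e = src f ∧ tgt e = tgt f) ∨ (src e = tgt f ∧ tgt e = src f)) → e = f)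
    (horient : ∀ (e : Fin E) (i : Fin n) (j : Fin m),
      ¬(src e = Sum.inl i ∧ tgt e = Sum.inr j))
    (hBpos : ∀ a b : Fin n ⊕ Fin m, busJoined src tgt a b → 0 < B a b)
    (hBzero : ∀ a b : Fin n ⊕ Fin m, a ≠ b → ¬ busJoined src tgt a b → B a b = 0)
    (hBLL : (-(BLL B)).PosDef)
    (hVG : ∀ j, 0 < VG j)
    (hacyclic : ∀ p : Fin E → ℝ, (incA src tgt).mulVec p = 0 → p = 0)
    (hconn : ∀ x : Fin n ⊕ Fin m → ℝ,
      (incA src tgt)ᵀ.mulVec x = 0 ↔ ∃ c : ℝ, x = fun _ => c)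
    (P : Fin n ⊕ Fin m → ℝ)
    (hP : ∑ a, P a = 0)
    (QL : Fin n → ℝ)
    (v : Fin n → ℝ) (hv : ∀ i, 0 < v i)
    (V : Fin n ⊕ Fin m → ℝ)
    (hV : V = Sum.elim (fun k => VLstar B VG k * v k) VG) :
    ((∃ θ : Fin n ⊕ Fin m → ℝ,
        (∀ e : Fin E, |(incA src tgt)ᵀ.mulVec θ e| ≤ Real.pi / 2)
        ∧ (∀ a : Fin n ⊕ Fin m,
            P a = ∑ b : Fin n ⊕ Fin m, V a * V b * B a b * Real.sin (θ a - θ b))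
        ∧ (∀ i : Fin n,
            QL i = -(∑ b : Fin n ⊕ Fin m,
              V (Sum.inl i) * V b * B (Sum.inl i) b * Real.cos (θ (Sum.inl i) - θ b))))
      ↔ ((∀ e : Fin E, |psif B VG src tgt P v e| ≤ 1)
          ∧ fppf B VG src tgt P QL v = v))
    ∧
    (∀ θ : Fin n ⊕ Fin m → ℝ,
      ((∀ e : Fin E, |(incA src tgt)ᵀ.mulVec θ e| ≤ Real.pi / 2)
        ∧ (∀ a : Fin n ⊕ Fin m,
            P a = ∑ b : Fin n ⊕ Fin m, V a * V b * B a b * Real.sin (θ a - θ b))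
        ∧ (∀ i : Fin n,
            QL i = -(∑ b : Fin n ⊕ Fin m,
              V (Sum.inl i) * V b * B (Sum.inl i) b * Real.cos (θ (Sum.inl i) - θ b)))) →
      ∀ e : Fin E, Real.sin ((incA src tgt)ᵀ.mulVec θ e) = psif B VG src tgt P v e) := by
  classical
  subst hV
  have hxpos := pf_VLstar_pos hm hBpos hBzero hBLL hVG hconn hne
  have hVsp := pf_Vstar_pos hm hBpos hBzero hBLL hVG hconn hne
  have hDpos : ∀ e, 0 < pfD B VG src tgt e := fun e =>
    mul_pos (mul_pos (hVsp _) (hVsp _)) (hBpos _ _ ⟨e, Or.inl ⟨rfl, rfl⟩⟩)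
  have hDne : ∀ e, pfD B VG src tgt e ≠ 0 := fun e => (hDpos e).ne'
  have hhne : ∀ e, hvec src tgt v e ≠ 0 := fun e => (pf_hvec_pos hv e).ne'
  have hVa : ∀ a, Sum.elim (fun k => VLstar B VG k * v k) VG a
      = Vstar B VG a * pfW (m := m) v a := by
    rintro (j | g) <;> simp [pfW, Vstar]
  have hVV : ∀ e, Sum.elim (fun k => VLstar B VG k * v k) VG (src e) *
      Sum.elim (fun k => VLstar B VG k * v k) VG (tgt e) * B (src e) (tgt e)
      = pfD B VG src tgt e * hvec src tgt v e := by
    intro e; rw [hVa, hVa, pf_hvec_eq]; unfold pfD; ring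
  have hpfl := pf_pflow_eq hn hne hacyclic hconn hP
  have hSIN : ∀ θ : Fin n ⊕ Fin m → ℝ,
      (∀ a, P a = ∑ b, Sum.elim (fun k => VLstar B VG k * v k) VG a
          * Sum.elim (fun k => VLstar B VG k * v k) VG b * B a b
          * Real.sin (θ a - θ b)) →
      ∀ e, Real.sin (θ (src e) - θ (tgt e)) = psif B VG src tgt P v e := by
    intro θ hact
    set q : Fin E → ℝ :=
      fun e => pfD B VG src tgt e * hvec src tgt v e * Real.sin (θ (src e) - θ (tgt e)) with hqdef
    have hAq : incA src tgt *ᵥ q = P := by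
      funext a
      show ∑ e, incA src tgt a e * q e = P a
      have h1 : ∑ e, incA src tgt a e * q e
          = ∑ e, incA src tgt a e *
              (Sum.elim (fun k => VLstar B VG k * v k) VG (src e) *
               Sum.elim (fun k => VLstar B VG k * v k) VG (tgt e) * B (src e) (tgt e) *
               Real.sin (θ (src e) - θ (tgt e))) := by
        exact Finset.sum_congr rfl fun e _ => by rw [hqdef]; rw [hVV e]
      rw [h1, ← pf_sum_sin hsym hne huniq hBzero _ θ a, ← hact a]
    have h0 := hacyclic (q - pflow src tgt P)
      (by rw [Matrix.mulVec_sub, hAq, hpfl, sub_self])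
    have hq : q = pflow src tgt P := sub_eq_zero.mp (by rw [h0])
    intro e
    have h2 : pfD B VG src tgt e * hvec src tgt v e * Real.sin (θ (src e) - θ (tgt e))
        = pflow src tgt P e := congrFun hq e
    rw [pf_psif_eq hhne hDne e, ← h2]
    symm
    rw [show pfD B VG src tgt e * hvec src tgt v e * Real.sin (θ (src e) - θ (tgt e))
        = hvec src tgt v e * pfD B VG src tgt e * Real.sin (θ (src e) - θ (tgt e)) by ring]
    exact inv_mul_cancel_left₀ (mul_ne_zero (hhne e) (hDne e)) _
  constructor
  · constructor
    · rintro ⟨θ, hang, hact, hreact⟩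
      have hsin := hSIN θ hact
      have hψ : ∀ e, |psif B VG src tgt P v e| ≤ 1 := fun e => by
        rw [← hsin e]; exact Real.abs_sin_le_one _
      refine ⟨hψ, ?_⟩
      have hcosu : ∀ e, 1 - Real.cos (θ (src e) - θ (tgt e))
          = uvec B VG src tgt P v e := by
        intro e
        have hb := hang e
        rw [pf_tmul hne] at hb
        have hb2 := abs_le.mp hb
        show _ = 1 - Real.sqrt (1 - (psif B VG src tgt P v e) ^ 2)
        rw [← hsin e, ← Real.cos_eq_sqrt_one_sub_sin_sq hb2.1 hb2.2]
      rw [pf_fppf_fixed_iff hBLL hxpos hv]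
      intro i
      rw [hreact i, pf_react_id hsym hne huniq hBzero hBLL θ hcosu i]
    · rintro ⟨hψ, hfix⟩
      obtain ⟨θ, hθ⟩ := pf_exists_theta hacyclic
        (fun e => Real.arcsin (psif B VG src tgt P v e))
      have hδ : ∀ e, θ (src e) - θ (tgt e)
          = Real.arcsin (psif B VG src tgt P v e) := fun e => by
        rw [← pf_tmul hne θ e, hθ]
      have hsin : ∀ e, Real.sin (θ (src e) - θ (tgt e))
          = psif B VG src tgt P v e := fun e => by
        rw [hδ e]
        exact Real.sin_arcsin (abs_le.mp (hψ e)).1 (abs_le.mp (hψ e)).2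
      refine ⟨θ, ?_, ?_, ?_⟩
      · intro e
        show |((incA src tgt)ᵀ *ᵥ θ) e| ≤ _
        rw [hθ]
        exact abs_le.mpr ⟨Real.neg_pi_div_two_le_arcsin _, Real.arcsin_le_pi_div_two _⟩
      · intro a
        rw [pf_sum_sin hsym hne huniq hBzero _ θ a]
        have hterm : ∀ e, incA src tgt a e *
            (Sum.elim (fun k => VLstar B VG k * v k) VG (src e) *
             Sum.elim (fun k => VLstar B VG k * v k) VG (tgt e) * B (src e) (tgt e) *
             Real.sin (θ (src e) - θ (tgt e)))
            = incA src tgt a e * pflow src tgt P e := by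
          intro e
          rw [hVV e, hsin e, pf_psif_eq hhne hDne e]
          congr 1
          rw [← mul_assoc, show pfD B VG src tgt e * hvec src tgt v e
              = hvec src tgt v e * pfD B VG src tgt e by ring,
            mul_inv_cancel₀ (mul_ne_zero (hhne e) (hDne e)), one_mul]
        rw [Finset.sum_congr rfl fun e _ => hterm e]
        exact (congrFun hpfl a).symm
      · intro i
        have hcosu : ∀ e, 1 - Real.cos (θ (src e) - θ (tgt e))
            = uvec B VG src tgt P v e := by
          intro e
          rw [hδ e, Real.cos_arcsin]
          rfl
        have h1 := (pf_fppf_fixed_iff hBLL hxpos hv).mp hfix i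
        rw [h1, ← pf_react_id hsym hne huniq hBzero hBLL θ hcosu i]
  · rintro θ ⟨hang, hact, hreact⟩ e
    show Real.sin (((incA src tgt)ᵀ *ᵥ θ) e) = _
    rw [pf_tmul hne]
    exact hSIN θ hact e
end

section
/- For every v ∈ ℝⁿ with strictly positive entries, the fixed-point power flow map satisfies f(v) = 1_n − ¼ S⁻¹ diag(Q_L) diag(v)⁻¹ 1_n + ¼ S⁻¹ |A|_L^{gℓ} D_{gℓ} u_{gℓ}(v) + ¼ S⁻¹ A_L^{ℓℓ}(+) diag(A_L^{ℓℓ}(−)ᵀ v) D_{ℓℓ} u_{ℓℓ}(v) + ¼ S⁻¹ A_L^{ℓℓ}(−) diag(A_L^{ℓℓ}(+)ᵀ v) D_{ℓℓ} u_{ℓℓ}(v), where u_{ℓℓ}(v) and u_{gℓ}(v) denote the subvectors of u(v) indexed by the load–load and generator–load edges, and D_{ℓℓ}, D_{gℓ} the corresponding diagonal blocks of D. -/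
open Matrix BigOperators

noncomputable section

/-- The load–load branches. -/
abbrev Ell {n m E : ℕ} (src tgt : Fin E → Fin n ⊕ Fin m) : Type :=
  {e : Fin E // (src e).isLeft ∧ (tgt e).isLeft}

/-- The generator–load branches (oriented from the generator to the load). -/
abbrev Egl {n m E : ℕ} (src tgt : Fin E → Fin n ⊕ Fin m) : Type :=
  {e : Fin E // (src e).isRight ∧ (tgt e).isLeft}

/-- The load–load diagonal block D_ℓℓ of the branch stiffness matrix. -/
def Dll {n m E : ℕ} (B : Matrix (Fin n ⊕ Fin m) (Fin n ⊕ Fin m) ℝ)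
    (VG : Fin m → ℝ) (src tgt : Fin E → Fin n ⊕ Fin m) :
    Matrix (Ell src tgt) (Ell src tgt) ℝ :=
  (Dmat B VG src tgt).submatrix Subtype.val Subtype.val

/-- The generator–load diagonal block D_gℓ of the branch stiffness matrix. -/
def Dgl {n m E : ℕ} (B : Matrix (Fin n ⊕ Fin m) (Fin n ⊕ Fin m) ℝ)
    (VG : Fin m → ℝ) (src tgt : Fin E → Fin n ⊕ Fin m) :
    Matrix (Egl src tgt) (Egl src tgt) ℝ :=
  (Dmat B VG src tgt).submatrix Subtype.val Subtype.val

/-- The positive part A_L^{ℓℓ}(+) of the load-rows block of the incidence matrix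
restricted to load–load branches. -/
def Apl {n m E : ℕ} (src tgt : Fin E → Fin n ⊕ Fin m) :
    Matrix (Fin n) (Ell src tgt) ℝ :=
  Matrix.of fun i e => if src e.1 = Sum.inl i then 1 else 0

/-- The negative part A_L^{ℓℓ}(−) of the load-rows block of the incidence matrix
restricted to load–load branches. -/
def Amin {n m E : ℕ} (src tgt : Fin E → Fin n ⊕ Fin m) :
    Matrix (Fin n) (Ell src tgt) ℝ :=
  Matrix.of fun i e => if tgt e.1 = Sum.inl i then 1 else 0

/-- The unsigned load-rows block |A|_L^{gℓ} of the incidence matrix restricted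
to generator–load branches. -/
def absAgl {n m E : ℕ} (src tgt : Fin E → Fin n ⊕ Fin m) :
    Matrix (Fin n) (Egl src tgt) ℝ :=
  Matrix.of fun i e => |incA src tgt (Sum.inl i) e.1|

/-- The subvector u_ℓℓ(v) of u(v) indexed by load–load branches. -/
def ull {n m E : ℕ} (B : Matrix (Fin n ⊕ Fin m) (Fin n ⊕ Fin m) ℝ)
    (VG : Fin m → ℝ) (src tgt : Fin E → Fin n ⊕ Fin m)
    (P : Fin n ⊕ Fin m → ℝ) (v : Fin n → ℝ) : Ell src tgt → ℝ :=
  fun e => uvec B VG src tgt P v e.1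

/-- The subvector u_gℓ(v) of u(v) indexed by generator–load branches. -/
def ugl {n m E : ℕ} (B : Matrix (Fin n ⊕ Fin m) (Fin n ⊕ Fin m) ℝ)
    (VG : Fin m → ℝ) (src tgt : Fin E → Fin n ⊕ Fin m)
    (P : Fin n ⊕ Fin m → ℝ) (v : Fin n → ℝ) : Egl src tgt → ℝ :=
  fun e => uvec B VG src tgt P v e.1

end

/-- Sum over a subtype equals the indicator sum over the whole type. -/
lemma sum_subtype_indicator {α : Type*} [Fintype α] (p : α → Prop) [DecidablePred p]
    (g : α → ℝ) :
    ∑ e : {x // p x}, g e.1 = ∑ e : α, if p e then g e else 0 := by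
  classical
  rw [← Finset.sum_filter]
  exact (Finset.sum_subtype _ (by simp) g).symm

lemma stmt16_key {n m E : ℕ}
    (B : Matrix (Fin n ⊕ Fin m) (Fin n ⊕ Fin m) ℝ)
    (VG : Fin m → ℝ) (src tgt : Fin E → Fin n ⊕ Fin m)
    (hne : ∀ e : Fin E, src e ≠ tgt e)
    (horient : ∀ (e : Fin E) (i : Fin n) (j : Fin m),
      ¬(src e = Sum.inl i ∧ tgt e = Sum.inr j))
    (P : Fin n ⊕ Fin m → ℝ) (v : Fin n → ℝ) (hv0 : ∀ i, v i ≠ 0) :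
    (Matrix.diagonal (fun i => (v i)⁻¹) * absAL src tgt * Dmat B VG src tgt *
        Matrix.diagonal (hvec src tgt v)).mulVec (uvec B VG src tgt P v)
      = (absAgl src tgt * Dgl B VG src tgt).mulVec (ugl B VG src tgt P v)
        + (Apl src tgt * Matrix.diagonal ((Amin src tgt)ᵀ.mulVec v) *
            Dll B VG src tgt).mulVec (ull B VG src tgt P v)
        + (Amin src tgt * Matrix.diagonal ((Apl src tgt)ᵀ.mulVec v) *
            Dll B VG src tgt).mulVec (ull B VG src tgt P v) := by
  classical
  set d : Fin E → ℝ :=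
    fun e => Vstar B VG (src e) * Vstar B VG (tgt e) * B (src e) (tgt e) with hd
  have hDmat : Dmat B VG src tgt = Matrix.diagonal d := rfl
  have hDll : Dll B VG src tgt = Matrix.diagonal (fun e : Ell src tgt => d e.1) := by
    rw [Dll, hDmat, Matrix.submatrix_diagonal _ _ Subtype.val_injective]
    rfl
  have hDgl : Dgl B VG src tgt = Matrix.diagonal (fun e : Egl src tgt => d e.1) := by
    rw [Dgl, hDmat, Matrix.submatrix_diagonal _ _ Subtype.val_injective]
    rfl
  funext i
  rw [hDmat, hDll, hDgl]
  simp only [Matrix.mulVec, dotProduct, Pi.add_apply,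
    Matrix.mul_diagonal, Matrix.diagonal_mul]
  have h1 : ∑ x : Egl src tgt, absAgl src tgt i x * d ↑x * ugl B VG src tgt P v x
      = ∑ e : Fin E, if (src e).isRight = true ∧ (tgt e).isLeft = true then
          |incA src tgt (Sum.inl i) e| * d e * uvec B VG src tgt P v e else 0 :=
    sum_subtype_indicator (fun e => (src e).isRight = true ∧ (tgt e).isLeft = true)
      (fun e => |incA src tgt (Sum.inl i) e| * d e * uvec B VG src tgt P v e)
  have h2 : ∑ x : Ell src tgt,
        (Apl src tgt i x * ∑ x_1 : Fin n, (Amin src tgt)ᵀ x x_1 * v x_1) * d ↑x *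
          ull B VG src tgt P v x
      = ∑ e : Fin E, if (src e).isLeft = true ∧ (tgt e).isLeft = true then
          ((if src e = Sum.inl i then (1:ℝ) else 0) *
            ∑ j : Fin n, (if tgt e = Sum.inl j then (1:ℝ) else 0) * v j) * d e *
            uvec B VG src tgt P v e else 0 :=
    sum_subtype_indicator (fun e => (src e).isLeft = true ∧ (tgt e).isLeft = true)
      (fun e => ((if src e = Sum.inl i then (1:ℝ) else 0) *
            ∑ j : Fin n, (if tgt e = Sum.inl j then (1:ℝ) else 0) * v j) * d e *
            uvec B VG src tgt P v e)
  have h3 : ∑ x : Ell src tgt,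
        (Amin src tgt i x * ∑ x_1 : Fin n, (Apl src tgt)ᵀ x x_1 * v x_1) * d ↑x *
          ull B VG src tgt P v x
      = ∑ e : Fin E, if (src e).isLeft = true ∧ (tgt e).isLeft = true then
          ((if tgt e = Sum.inl i then (1:ℝ) else 0) *
            ∑ j : Fin n, (if src e = Sum.inl j then (1:ℝ) else 0) * v j) * d e *
            uvec B VG src tgt P v e else 0 :=
    sum_subtype_indicator (fun e => (src e).isLeft = true ∧ (tgt e).isLeft = true)
      (fun e => ((if tgt e = Sum.inl i then (1:ℝ) else 0) *
            ∑ j : Fin n, (if src e = Sum.inl j then (1:ℝ) else 0) * v j) * d e *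
            uvec B VG src tgt P v e)
  rw [h1, h2, h3, ← Finset.sum_add_distrib, ← Finset.sum_add_distrib]
  apply Finset.sum_congr rfl
  intro e _
  rcases hs : src e with j | g <;> rcases ht : tgt e with k | g'
  · -- load–load
    have hjk : j ≠ k := by
      intro h; exact hne e (by rw [hs, ht, h])
    simp only [absAL, incA, hvec, hs, ht, Matrix.of_apply, Sum.isLeft_inl,
      Sum.isRight_inl, Sum.isLeft_inr, Sum.isRight_inr, Sum.inl.injEq,
      ite_mul, one_mul, zero_mul, mul_ite, mul_zero, Finset.sum_ite_eq,
      Finset.mem_univ, if_true, and_self, and_true, true_and, if_false,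
      false_and, Bool.false_eq_true, reduceIte]
    by_cases hji : j = i
    · have hki : ¬ k = i := fun h => hjk (hji.trans h.symm)
      rw [hji, if_pos rfl, if_neg hki, if_pos rfl]
      simp only [abs_one, add_zero, zero_add]
      field_simp [hv0]
    · by_cases hki : k = i
      · rw [hki, if_neg hji, if_pos rfl, if_neg hji, if_pos rfl]
        simp only [abs_neg, abs_one, zero_add, add_zero]
        field_simp [hv0]
      ring
      · simp [hji, hki]
  · -- load–generator: impossible
    exact absurd ⟨hs, ht⟩ (horient e j g')
  · -- generator–load
    simp only [absAL, incA, hvec, hs, ht, Matrix.of_apply, Sum.isLeft_inl,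
      Sum.isRight_inr, Sum.isLeft_inr, Sum.inl.injEq, reduceCtorEq,
      ite_mul, one_mul, zero_mul, mul_ite, mul_zero, Finset.sum_ite_eq,
      Finset.mem_univ, if_true, and_self, if_false, false_and,
      Bool.false_eq_true, and_false, reduceIte]
    by_cases hki : k = i
    · subst hki
      simp only [if_true, reduceIte, abs_neg, abs_one]
      field_simp [hv0]
      ring
    · simp [hki]
  · -- generator–generator
    simp [absAL, incA, hvec, hs, ht]

/-- Alternative form of the fixed-point power flow map (Corollary 3 of the paper):
f(v) = 1 − ¼S⁻¹ diag(Q_L) diag(v)⁻¹ 1 + ¼S⁻¹ |A|_L^{gℓ} D_{gℓ} u_{gℓ}(v)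
       + ¼S⁻¹ A_L^{ℓℓ}(+) diag(A_L^{ℓℓ}(−)ᵀ v) D_{ℓℓ} u_{ℓℓ}(v)
       + ¼S⁻¹ A_L^{ℓℓ}(−) diag(A_L^{ℓℓ}(+)ᵀ v) D_{ℓℓ} u_{ℓℓ}(v). -/
theorem stmt16 {n m E : ℕ} (hn : 0 < n) (hm : 0 < m)
    (B : Matrix (Fin n ⊕ Fin m) (Fin n ⊕ Fin m) ℝ)
    (VG : Fin m → ℝ)
    (src tgt : Fin E → Fin n ⊕ Fin m)
    (hsym : Bᵀ = B)
    (hne : ∀ e : Fin E, src e ≠ tgt e)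
    (huniq : ∀ e f : Fin E,
      ((src e = src f ∧ tgt e = tgt f) ∨ (src e = tgt f ∧ tgt e = src f)) → e = f)
    (horient : ∀ (e : Fin E) (i : Fin n) (j : Fin m),
      ¬(src e = Sum.inl i ∧ tgt e = Sum.inr j))
    (hBpos : ∀ a b : Fin n ⊕ Fin m, busJoined src tgt a b → 0 < B a b)
    (hBzero : ∀ a b : Fin n ⊕ Fin m, a ≠ b → ¬ busJoined src tgt a b → B a b = 0)
    (hBLL : (-(BLL B)).PosDef)
    (hVG : ∀ j, 0 < VG j)
    (hacyclic : ∀ p : Fin E → ℝ, (incA src tgt).mulVec p = 0 → p = 0)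
    (hconn : ∀ x : Fin n ⊕ Fin m → ℝ,
      (incA src tgt)ᵀ.mulVec x = 0 ↔ ∃ c : ℝ, x = fun _ => c)
    (P : Fin n ⊕ Fin m → ℝ)
    (hP : ∑ a, P a = 0)
    (QL : Fin n → ℝ) :
    ∀ v : Fin n → ℝ, (∀ i, 0 < v i) →
      fppf B VG src tgt P QL v
        = (fun _ => (1 : ℝ))
          - (4⁻¹ : ℝ) •
            (((Smat B VG)⁻¹ * Matrix.diagonal QL * (Matrix.diagonal v)⁻¹).mulVec
              fun _ => (1 : ℝ))
          + (4⁻¹ : ℝ) •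
            (((Smat B VG)⁻¹ * absAgl src tgt * Dgl B VG src tgt).mulVec
              (ugl B VG src tgt P v))
          + (4⁻¹ : ℝ) •
            (((Smat B VG)⁻¹ * Apl src tgt *
                Matrix.diagonal ((Amin src tgt)ᵀ.mulVec v) * Dll B VG src tgt).mulVec
              (ull B VG src tgt P v))
          + (4⁻¹ : ℝ) •
            (((Smat B VG)⁻¹ * Amin src tgt *
                Matrix.diagonal ((Apl src tgt)ᵀ.mulVec v) * Dll B VG src tgt).mulVec
              (ull B VG src tgt P v)) := by
  intro v hv
  classical
  have hv0 : ∀ i, v i ≠ 0 := fun i => ne_of_gt (hv i)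
  have hdi : (Matrix.diagonal v)⁻¹ = Matrix.diagonal (fun i => (v i)⁻¹) := by
    apply Matrix.inv_eq_right_inv
    rw [Matrix.diagonal_mul_diagonal,
      show (fun i => v i * (v i)⁻¹) = fun _ : Fin n => (1:ℝ) from
        funext fun i => mul_inv_cancel₀ (hv0 i),
      Matrix.diagonal_one]
  have key := stmt16_key B VG src tgt hne horient P v hv0
  simp only [fppf, Matrix.mul_assoc, ← Matrix.mulVec_mulVec] at key ⊢
  rw [hdi, key, Matrix.mulVec_add, Matrix.mulVec_add, smul_add, smul_add]
  abel
end
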